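/- Let Δ be a pure simplicial complex of dimension d-1 ≥ 1 and let U be a subset of its vertex set such that every facet of Δ contains exactly one vertex of U. If Δ is Cohen-Macaulay over k and the link of every vertex u ∈ U is doubly Cohen-Macaulay over k, then the complex Δ \ U (all faces of Δ disjoint from U) is doubly Cohen-Macaulay over k. -/

import Mathlib

open Finset

/-- The Möbius function of a finite partial order, valued in `ℤ`. -/
noncomputable def pmu (α : Type*) [PartialOrder α] [Finite α] : α → α → ℤ :=
  letI := Fintype.ofFinite α
  letI := Classical.decEq α
  letI : DecidableRel ((· ≤ ·) : α → α → Prop) := Classical.decRel _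
  letI : DecidableRel ((· < ·) : α → α → Prop) := Classical.decRel _
  letI := Fintype.toLocallyFiniteOrder (α := α)
  fun x y => IncidenceAlgebra.mu ℤ x y

variable {α : Type*} [PartialOrder α]

/-- `c` is a maximal chain of the subposet `S`. -/
def IsMaxChainIn (S : Set α) (c : Finset α) : Prop :=
  ↑c ⊆ S ∧ IsChain (· ≤ ·) (c : Set α) ∧
    ∀ c' : Finset α, ↑c' ⊆ S → IsChain (· ≤ ·) (c' : Set α) → c ⊆ c' → c = c'

/-- The interval `[x,y]` is graded of rank `r`: every maximal chain of it has `r+1` elements. -/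
def IntervalGraded (x y : α) (r : ℕ) : Prop :=
  ∀ c : Finset α, IsMaxChainIn (Set.Icc x y) c → c.card = r + 1

/-- The subposet `S` is graded of rank `d`: every maximal chain of `S` has `d+1` elements. -/
def GradedRank (S : Set α) (d : ℕ) : Prop :=
  ∀ c : Finset α, IsMaxChainIn S c → c.card = d + 1

/-- A finite poset is lower Eulerian with rank function `ρ` on intervals: every interval
`[x,y]` is graded of rank `ρ x y` with `μ(x,y) = (-1)^{ρ x y}` (a minimum element is
required separately, via `OrderBot`). -/
def LowerEulerianWith (α : Type*) [PartialOrder α] [Finite α] (ρ : α → α → ℕ) : Prop :=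
  ∀ x y : α, x ≤ y → IntervalGraded x y (ρ x y) ∧ pmu α x y = (-1) ^ ρ x y

instance (α : Type*) [Fintype α] : Fintype (WithTop α) := instFintypeOption
instance (α : Type*) [Fintype α] : Fintype (WithBot α) := instFintypeOption

instance (α : Type*) [Finite α] : Finite (WithTop α) :=
  letI := Fintype.ofFinite α; @Finite.of_fintype (WithTop α) (instFintypeOption (α := α))
instance (α : Type*) [Finite α] : Finite (WithBot α) :=
  letI := Fintype.ofFinite α; @Finite.of_fintype (WithBot α) (instFintypeOption (α := α))

open scoped Classical in
/-- The order complex of the subposet `S`: the collection of finite chains contained in `S`. -/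
noncomputable def chainsIn {α : Type*} [PartialOrder α] [Fintype α] (S : Set α) :
    Finset (Finset α) :=
  Finset.univ.filter fun s => ↑s ⊆ S ∧ IsChain (· ≤ ·) (s : Set α)

/-- The reduced Euler characteristic of a finite simplicial complex
(`χ̃ = Σ_{σ ∈ K} (-1)^{|σ|-1}`, the empty face contributing `-1`). -/
def redEuler {V : Type*} (K : Finset (Finset V)) : ℤ :=
  -∑ s ∈ K, (-1 : ℤ) ^ s.card

/-- The geometric realization of a finite simplicial complex `K`, as the space of convex
weightings supported on faces of `K`, topologized as a subspace of `V → ℝ`. -/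
def realiz {V : Type*} [Fintype V] (K : Finset (Finset V)) : Type _ :=
  {f : V → ℝ // (∃ s ∈ K, ∀ v, f v ≠ 0 → v ∈ s) ∧ (∀ v, 0 ≤ f v) ∧ ∑ v, f v = 1}

instance {V : Type*} [Fintype V] (K : Finset (Finset V)) : TopologicalSpace (realiz K) :=
  instTopologicalSpaceSubtype

section Homology

open Finset

variable (k : Type*) [Field k] {V : Type*} [Fintype V]

/-- An auxiliary linear order on the (finite) vertex set, used to orient simplices. -/
noncomputable def vOrd (V : Type*) [Fintype V] : LinearOrder V :=
  LinearOrder.lift' (Fintype.equivFin V) (Equiv.injective _)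

/-- The position of the vertex `v` in the face `s`, with respect to the auxiliary order. -/
noncomputable def vIdx (s : Finset V) (v : V) : ℕ :=
  letI := vOrd V
  letI := Classical.decEq V
  (s.sort (· ≤ ·)).idxOf v

/-- The space of simplicial `k`-chains on all faces with `n` vertices
(`n = 0` corresponds to the empty face, giving augmented/reduced chains). -/
abbrev ChSp (k : Type*) [Field k] (V : Type*) (n : ℕ) := {s : Finset V // s.card = n} →₀ k

/-- The simplicial boundary map, from chains on faces with `n+1` vertices to chains on
faces with `n` vertices. -/
noncomputable def bdry (n : ℕ) : ChSp k V (n + 1) →ₗ[k] ChSp k V n :=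
  letI := Classical.decEq V
  Finsupp.lsum k fun s =>
    LinearMap.smulRight (LinearMap.id : k →ₗ[k] k)
      (∑ v ∈ s.1.attach,
        ((-1 : k) ^ vIdx s.1 v.1) •
          Finsupp.single ⟨s.1.erase v.1, by
            simp [Finset.card_erase_of_mem v.2, s.2]⟩ (1 : k))

/-- The submodule of chains supported on faces of the complex `K`. -/
def suppIn (K : Finset (Finset V)) (n : ℕ) : Submodule k (ChSp k V n) where
  carrier := {c | ∀ s ∈ c.support, (s : {s : Finset V // s.card = n}).1 ∈ K}
  add_mem' := by
    classical
    intro a b ha hb s hs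
    rcases Finset.mem_union.1 (Finsupp.support_add hs) with h | h
    · exact ha s h
    · exact hb s h
  zero_mem' := by simp
  smul_mem' := by
    classical
    intro t a ha s hs
    exact ha s (Finsupp.support_smul hs)

/-- The reduced cycles of the complex `K` in chain degree `m` (faces with `m` vertices,
i.e. geometric dimension `m-1`). -/
noncomputable def zcyc (K : Finset (Finset V)) : ∀ m : ℕ, Submodule k (ChSp k V m)
  | 0 => suppIn k K 0
  | (n + 1) => suppIn k K (n + 1) ⊓ LinearMap.ker (bdry k n)

/-- The boundaries of the complex `K` in chain degree `m`. -/
noncomputable def zbnd (K : Finset (Finset V)) (m : ℕ) : Submodule k (ChSp k V m) :=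
  Submodule.map (bdry k m) (suppIn k K (m + 1))

/-- Vanishing of the reduced homology `H̃_i(K; k)` (for `i : ℤ`): every reduced `i`-cycle
supported on `K` is the boundary of a chain supported on `K`. -/
noncomputable def HVanish (K : Finset (Finset V)) (i : ℤ) : Prop :=
  if i < -1 then True else zcyc k K (i + 1).toNat ≤ zbnd k K (i + 1).toNat

/-- The dimension of a finite simplicial complex, as an integer (`-1` for the void or
empty complex). -/
def dimC (K : Finset (Finset V)) : ℤ := (↑(K.sup Finset.card) : ℤ) - 1

open scoped Classical in
/-- The link of a face `σ` in the complex `K`. -/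
noncomputable def linkC (K : Finset (Finset V)) (σ : Finset V) : Finset (Finset V) :=
  Finset.univ.filter fun γ => Disjoint γ σ ∧ γ ∪ σ ∈ K

/-- A complex is closed under taking subsets of faces. -/
def DownClosed (K : Finset (Finset V)) : Prop :=
  ∀ s t : Finset V, t ∈ K → s ⊆ t → s ∈ K

/-- `K` is Cohen-Macaulay over `k`: for every face `σ` of `K` (including the empty face),
`H̃_i(link_K σ; k) = 0` for all `i < dim link_K σ`. -/
noncomputable def IsCM (K : Finset (Finset V)) : Prop :=
  ∀ σ ∈ K, ∀ i : ℤ, i < dimC (linkC K σ) → HVanish k (linkC K σ) i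

open scoped Classical in
/-- The deletion of a set `U` of vertices from `K`: all faces disjoint from `U`. -/
noncomputable def delV (K : Finset (Finset V)) (U : Finset V) : Finset (Finset V) :=
  K.filter fun σ => Disjoint σ U

/-- `K` is doubly Cohen-Macaulay over `k`: it is Cohen-Macaulay and deleting any vertex
leaves a Cohen-Macaulay complex of the same dimension. -/
noncomputable def Is2CM (K : Finset (Finset V)) : Prop :=
  IsCM k K ∧ ∀ v : V, {v} ∈ K → IsCM k (delV K {v}) ∧ dimC (delV K {v}) = dimC K

/-- `s` is a facet (maximal face) of `K`. -/
def IsFacet (K : Finset (Finset V)) (s : Finset V) : Prop :=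
  s ∈ K ∧ ∀ t ∈ K, s ⊆ t → s = t

/-- `K` is pure: all facets have `m` vertices. -/
def PureCard (K : Finset (Finset V)) (m : ℕ) : Prop :=
  ∀ s : Finset V, IsFacet K s → s.card = m

end Homology


/- ===================== Auxiliary development ===================== -/
set_option linter.unusedSectionVars false
set_option maxHeartbeats 1000000

open Finset

section IdxLemmas

lemma list_indexOf_sorted {W : Type*} [LinearOrder W] :
    ∀ (l : List W), l.Pairwise (· ≤ ·) → l.Nodup → ∀ x ∈ l,
      l.idxOf x = l.countP (fun b => decide (b < x)) := by
  intro l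
  induction l with
  | nil => simp
  | cons a t ih =>
    intro hs hn x hx
    have hs' := List.pairwise_cons.1 hs
    have hn' := List.nodup_cons.1 hn
    rcases List.mem_cons.1 hx with rfl | hx'
    · rw [List.idxOf_cons_self, List.countP_cons]
      have h2 : t.countP (fun b => decide (b < x)) = 0 := by
        rw [List.countP_eq_zero]
        intro b hb
        simp only [decide_eq_true_eq]
        exact not_lt.2 (hs'.1 b hb)
      simp [h2]
    · have hne : x ≠ a := by rintro rfl; exact hn'.1 hx'
      rw [List.idxOf_cons_ne _ (Ne.symm hne), ih hs'.2 hn'.2 x hx', List.countP_cons]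
      have h1 : (decide (a < x)) = true := by
        simp only [decide_eq_true_eq]
        exact lt_of_le_of_ne (hs'.1 x hx') (by rintro rfl; exact hn'.1 hx')
      simp [h1]

variable {V : Type*} [Fintype V]

attribute [local instance] vOrd

lemma vIdx_eq_count (s : Finset V) (x : V) (hx : x ∈ s) :
    vIdx s x = (s.filter (fun z => z < x)).card := by
  classical
  unfold vIdx
  rw [Subsingleton.elim (Classical.decEq V) (inferInstance : DecidableEq V)]
  rw [list_indexOf_sorted (s.sort (· ≤ ·)) (Finset.pairwise_sort _ _) (Finset.sort_nodup _ _) x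
    ((Finset.mem_sort _).2 hx)]
  have h1 : List.countP (fun b => decide (b < x)) (s.sort (· ≤ ·))
      = List.countP (fun b => decide (b < x)) s.toList :=
    (Finset.sort_perm_toList _ _).countP_eq _
  have h3 : (↑s.toList : Multiset V) = s.val := by
    simp [Finset.toList]
  rw [h1, ← Multiset.coe_countP, h3, Multiset.countP_eq_card_filter]
  rw [Finset.card, Finset.filter_val]

end IdxLemmas

section ChainInfra

open scoped Classical

variable (k : Type*) [Field k] {V : Type*} [Fintype V]

attribute [local instance] vOrd

noncomputable local instance (priority := high) : DecidableEq V := Classical.decEq V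

/-- Build a chain from a coefficient function. -/
noncomputable def mkCh {n : ℕ} (f : {s : Finset V // s.card = n} → k) : ChSp k V n :=
  Finsupp.equivFunOnFinite.symm f

@[simp] lemma mkCh_apply {n : ℕ} (f : {s : Finset V // s.card = n} → k) (s) :
    mkCh k f s = f s := rfl

/-- Insert a vertex into a face. -/
noncomputable def insF {n : ℕ} (t : {s : Finset V // s.card = n}) (x : V) (hx : x ∉ t.1) :
    {s : Finset V // s.card = n + 1} :=
  ⟨insert x t.1, by rw [Finset.card_insert_of_notMem hx, t.2]⟩

/-- Erase a vertex from a face. -/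
noncomputable def erF {n : ℕ} (t : {s : Finset V // s.card = n + 1}) (x : V) (hx : x ∈ t.1) :
    {s : Finset V // s.card = n} :=
  ⟨t.1.erase x, by rw [Finset.card_erase_of_mem hx, t.2]; rfl⟩

lemma negOne_pow_mul_self (m : ℕ) : (-1 : k) ^ m * (-1 : k) ^ m = 1 := by
  rw [← pow_add]
  exact Even.neg_one_pow ⟨m, rfl⟩

lemma vIdx_sq (s : Finset V) (x : V) : (-1 : k) ^ vIdx s x * (-1 : k) ^ vIdx s x = 1 :=
  negOne_pow_mul_self k _

/-- Coefficient formula for the boundary map, for a single generator. -/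
lemma bdry_single_apply {n : ℕ} (s : {s : Finset V // s.card = n + 1}) (a : k)
    (t : {s : Finset V // s.card = n}) :
    bdry k n (Finsupp.single s a) t = ∑ y : V, if h : y ∈ t.1 then 0 else
      (-1 : k) ^ vIdx (insert y t.1) y * (Finsupp.single s a) (insF t y h) := by
  unfold bdry
  rw [Finsupp.lsum_single]
  rw [LinearMap.smulRight_apply, LinearMap.id_apply]
  rw [Finsupp.smul_apply, Finsupp.finset_sum_apply]
  simp only [Finsupp.smul_apply, Finsupp.single_apply, smul_eq_mul, mul_ite, mul_one, mul_zero]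
  by_cases hsub : t.1 ⊆ s.1
  · have hcard : (s.1 \ t.1).card = 1 := by
      rw [Finset.card_sdiff_of_subset hsub, s.2, t.2]; simp
    obtain ⟨z, hz⟩ := Finset.card_eq_one.1 hcard
    have hzs : z ∈ s.1 := (Finset.mem_sdiff.1 (hz ▸ Finset.mem_singleton_self z)).1
    have hzt : z ∉ t.1 := (Finset.mem_sdiff.1 (hz ▸ Finset.mem_singleton_self z)).2
    have hst : s.1 = insert z t.1 := by
      apply Finset.Subset.antisymm
      · intro w hw
        by_cases hwt : w ∈ t.1
        · exact Finset.mem_insert_of_mem hwt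
        · have : w ∈ s.1 \ t.1 := Finset.mem_sdiff.2 ⟨hw, hwt⟩
          rw [hz] at this
          exact Finset.mem_insert.2 (Or.inl (Finset.mem_singleton.1 this))
      · exact Finset.insert_subset hzs hsub
    have her : s.1.erase z = t.1 := by rw [hst, Finset.erase_insert hzt]
    rw [Finset.sum_eq_single_of_mem (⟨z, hzs⟩ : {v // v ∈ (s.1 : Finset V)})
      (Finset.mem_attach _ _) (fun b _ hne => by
        rw [if_neg]
        intro hEq
        apply hne
        have hEq' : (s.1).erase b.1 = t.1 := by
          rw [Subtype.ext_iff] at hEq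
          exact hEq
        apply Subtype.ext
        show b.1 = z
        by_contra hbz
        have : z ∈ s.1.erase b.1 := Finset.mem_erase.2 ⟨fun h => hbz h.symm, hzs⟩
        rw [hEq'] at this
        exact hzt this)]
    rw [Finset.sum_eq_single z (fun y _ hyz => by
        by_cases hyt : y ∈ t.1
        · rw [dif_pos hyt]
        · rw [dif_neg hyt, if_neg]
          intro hEq
          apply hyz
          have hEq2 : s.1 = insert y t.1 := by
            rw [Subtype.ext_iff] at hEq
            exact hEq
          have : y ∈ s.1 \ t.1 := by
            rw [hEq2]
            exact Finset.mem_sdiff.2 ⟨Finset.mem_insert_self _ _, hyt⟩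
          rw [hz] at this
          exact Finset.mem_singleton.1 this)
      (fun h => absurd (Finset.mem_univ z) h)]
    have hvaux : vIdx (insert z t.1) z = vIdx s.1 z := by rw [← hst]
    rw [if_pos (Subtype.ext (by exact her)), dif_neg hzt, if_pos (Subtype.ext (by exact hst)), hvaux, mul_comm]
  · rw [Finset.sum_eq_zero (fun b _ => by
        rw [if_neg]
        intro hEq
        apply hsub
        have hEq' : (s.1).erase b.1 = t.1 := by
          rw [Subtype.ext_iff] at hEq
          exact hEq
        rw [← hEq']
        exact Finset.erase_subset _ _),
      Finset.sum_eq_zero (fun y _ => by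
        by_cases hyt : y ∈ t.1
        · rw [dif_pos hyt]
        · rw [dif_neg hyt, if_neg]
          intro hEq
          apply hsub
          have hEq' : s.1 = insert y t.1 := by
            rw [Subtype.ext_iff] at hEq
            exact hEq
          rw [hEq']
          exact Finset.subset_insert _ _), mul_zero]

/-- Coefficient formula for the boundary map. -/
lemma bdry_apply {n : ℕ} (c : ChSp k V (n + 1)) (t : {s : Finset V // s.card = n}) :
    bdry k n c t = ∑ y : V, if h : y ∈ t.1 then 0 else
      (-1 : k) ^ vIdx (insert y t.1) y * c (insF t y h) := by
  induction c using Finsupp.induction with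
  | zero => simp
  | single_add s a c hs ha ih =>
    rw [map_add, Finsupp.add_apply, ih, bdry_single_apply, ← Finset.sum_add_distrib]
    apply Finset.sum_congr rfl
    intro y _
    by_cases hyt : y ∈ t.1
    · simp [hyt]
    · simp only [dif_neg hyt, Finsupp.add_apply, mul_add]

lemma faceApp_congr {n : ℕ} (e : ChSp k V n) {s t : {s : Finset V // s.card = n}}
    (h : s.1 = t.1) : e s = e t := by
  congr 1
  exact Subtype.ext h

lemma vIdx_erase_add (s : Finset V) (x y : V) (hx : x ∈ s) (hxy : x ≠ y) :
    vIdx s x = vIdx (s.erase y) x + (if y < x ∧ y ∈ s then 1 else 0) := by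
  rw [vIdx_eq_count s x hx, vIdx_eq_count (s.erase y) x (Finset.mem_erase.2 ⟨hxy, hx⟩)]
  have hfe : (s.erase y).filter (fun z => z < x) = (s.filter (fun z => z < x)).erase y := by
    ext w
    simp only [Finset.mem_filter, Finset.mem_erase]
    tauto
  rw [hfe]
  by_cases hmem : y < x ∧ y ∈ s
  · rw [if_pos hmem]
    have hyf : y ∈ s.filter (fun z => z < x) := Finset.mem_filter.2 ⟨hmem.2, hmem.1⟩
    rw [← Finset.card_erase_add_one hyf]
  · rw [if_neg hmem]
    have hyf : y ∉ s.filter (fun z => z < x) := by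
      intro hc
      exact hmem ⟨(Finset.mem_filter.1 hc).2, (Finset.mem_filter.1 hc).1⟩
    rw [Finset.erase_eq_of_notMem hyf, add_zero]

lemma sign_swap (s : Finset V) (x y : V) (hx : x ∈ s) (hy : y ∈ s) (hxy : x ≠ y) :
    (-1 : k) ^ vIdx s x * (-1 : k) ^ vIdx s y
      = -((-1 : k) ^ vIdx (s.erase y) x * (-1 : k) ^ vIdx (s.erase x) y) := by
  rw [vIdx_erase_add s x y hx hxy, vIdx_erase_add s y x hy (Ne.symm hxy)]
  rcases lt_or_gt_of_ne (show x ≠ y from hxy) with hlt | hlt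
  · rw [if_neg (by intro hc; exact absurd hc.1 (not_lt.2 hlt.le)), if_pos ⟨hlt, hx⟩]
    rw [pow_add, pow_add, pow_zero, pow_one]
    ring
  · rw [if_pos ⟨hlt, hy⟩, if_neg (by intro hc; exact absurd hc.1 (not_lt.2 hlt.le))]
    rw [pow_add, pow_add, pow_zero, pow_one]
    ring

/-- The cone of a chain over a vertex `x` (with orientation signs). -/
noncomputable def coneC (x : V) {n : ℕ} (e : ChSp k V n) : ChSp k V (n + 1) :=
  mkCh k fun s => if hx : x ∈ s.1 then (-1 : k) ^ vIdx s.1 x * e (erF s x hx) else 0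

lemma coneC_apply_pos (x : V) {n : ℕ} (e : ChSp k V n) (s) (hx : x ∈ s.1) :
    coneC k x e s = (-1 : k) ^ vIdx s.1 x * e (erF s x hx) := by
  show dite _ _ _ = _
  rw [dif_pos hx]

lemma coneC_apply_neg (x : V) {n : ℕ} (e : ChSp k V n) (s) (hx : x ∉ s.1) :
    coneC k x e s = 0 := by
  show dite _ _ _ = _
  rw [dif_neg hx]

/-- The chain `a_x` such that the `x`-part of `c` is `cone x a_x`. -/
noncomputable def unconeC (x : V) {n : ℕ} (c : ChSp k V (n + 1)) : ChSp k V n :=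
  mkCh k fun γ => if hγ : x ∈ γ.1 then 0
    else (-1 : k) ^ vIdx (insert x γ.1) x * c (insF γ x hγ)

lemma unconeC_apply_pos (x : V) {n : ℕ} (c : ChSp k V (n + 1)) (γ) (hγ : x ∉ γ.1) :
    unconeC k x c γ = (-1 : k) ^ vIdx (insert x γ.1) x * c (insF γ x hγ) := by
  show dite _ _ _ = _
  rw [dif_neg hγ]

lemma unconeC_apply_neg (x : V) {n : ℕ} (c : ChSp k V (n + 1)) (γ) (hγ : x ∈ γ.1) :
    unconeC k x c γ = 0 := by
  show dite _ _ _ = _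
  rw [dif_pos hγ]

lemma coneC_unconeC_apply (x : V) {n : ℕ} (c : ChSp k V (n + 1)) (s) :
    coneC k x (unconeC k x c) s = if x ∈ s.1 then c s else 0 := by
  by_cases hx : x ∈ s.1
  · rw [if_pos hx, coneC_apply_pos k x _ s hx]
    have hx' : x ∉ (erF s x hx).1 := Finset.notMem_erase _ _
    rw [unconeC_apply_pos k x c _ hx']
    have hins : (insF (erF s x hx) x hx').1 = s.1 := by
      show insert x (s.1.erase x) = s.1
      exact Finset.insert_erase hx
    rw [faceApp_congr k c hins]
    have hexp : vIdx (insert x (erF s x hx).1) x = vIdx s.1 x := by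
      show vIdx (insert x (s.1.erase x)) x = _
      rw [Finset.insert_erase hx]
    rw [hexp, ← mul_assoc, vIdx_sq, one_mul]
  · rw [if_neg hx, coneC_apply_neg k x _ s hx]

lemma bdry_coneC {n : ℕ} (x : V) (e : ChSp k V (n + 1))
    (hfree : ∀ s, e s ≠ 0 → x ∉ s.1) :
    bdry k (n + 1) (coneC k x e) = e - coneC k x (bdry k n e) := by
  apply Finsupp.ext
  intro t
  rw [bdry_apply, Finsupp.sub_apply]
  by_cases hxt : x ∈ t.1
  · -- `x ∈ t` : both sides reduce to sums; compare termwise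
    have het : e t = 0 := by
      by_contra hc
      exact hfree t hc hxt
    rw [het, coneC_apply_pos k x _ t hxt, bdry_apply, zero_sub, Finset.mul_sum, ← Finset.sum_neg_distrib]
    apply Finset.sum_congr rfl
    intro y _
    by_cases hyt : y ∈ t.1
    · rw [dif_pos hyt]
      by_cases hyx : y = x
      · subst hyx
        rw [dif_neg (show y ∉ (erF t y hyt).1 from Finset.notMem_erase y t.1)]
        have h1 : (insF (erF t y hyt) y (Finset.notMem_erase y t.1)).1 = t.1 := by
          show insert y (t.1.erase y) = t.1
          exact Finset.insert_erase hyt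
        rw [faceApp_congr k e h1, het, mul_zero, mul_zero, neg_zero]
      · rw [dif_pos (show y ∈ (erF t x hxt).1 from Finset.mem_erase.2 ⟨hyx, hyt⟩), mul_zero, neg_zero]
    · rw [dif_neg hyt]
      have hyx : y ≠ x := by rintro rfl; exact hyt hxt
      have hxins : x ∈ (insF t y hyt).1 := Finset.mem_insert_of_mem hxt
      rw [coneC_apply_pos k x e _ hxins]
      have hyer : y ∉ t.1.erase x := fun hc => hyt (Finset.mem_of_mem_erase hc)
      rw [dif_neg (show y ∉ (erF t x hxt).1 from hyer)]
      -- identify the two faces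
      have hface : (erF (insF t y hyt) x hxins).1 = (insF (erF t x hxt) y hyer).1 := by
        show (insert y t.1).erase x = insert y (t.1.erase x)
        rw [Finset.erase_insert_of_ne (by exact hyx)]
      rw [faceApp_congr k e hface]
      -- sign identity
      have hyi : y ∈ insert y t.1 := Finset.mem_insert_self _ _
      have hxi : x ∈ insert y t.1 := Finset.mem_insert_of_mem hxt
      have hs3 := sign_swap k (insert y t.1) y x hyi hxi hyx
      have h4 : (insert y t.1).erase x = insert y (t.1.erase x) :=
        Finset.erase_insert_of_ne (by exact hyx)
      have h5 : (insert y t.1).erase y = t.1 := Finset.erase_insert hyt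
      rw [h4, h5] at hs3
      have h6 : vIdx (insert y (t.1.erase x)) y
          = vIdx (insert y ((erF t x hxt).1 : Finset V)) y := rfl
      calc (-1:k) ^ vIdx (insert y t.1) y *
            ((-1:k) ^ vIdx (insert y t.1) x * e (insF (erF t x hxt) y hyer))
          = ((-1:k) ^ vIdx (insert y t.1) y * (-1:k) ^ vIdx (insert y t.1) x) *
            e (insF (erF t x hxt) y hyer) := by ring
        _ = _ := by
            rw [hs3, ← h6]
            ring
  · -- `x ∉ t` : single surviving term
    rw [coneC_apply_neg k x _ t hxt, sub_zero]
    rw [Finset.sum_eq_single x (fun y _ hyx => by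
        by_cases hyt : y ∈ t.1
        · rw [dif_pos hyt]
        · rw [dif_neg hyt]
          have : x ∉ (insF t y hyt).1 := by
            intro hc
            rcases Finset.mem_insert.1 hc with h | h
            · exact hyx h.symm
            · exact hxt h
          rw [coneC_apply_neg k x e _ this, mul_zero])
      (fun h => absurd (Finset.mem_univ x) h)]
    rw [dif_neg hxt]
    have hxins : x ∈ (insF t x hxt).1 := Finset.mem_insert_self _ _
    rw [coneC_apply_pos k x e _ hxins]
    have hface : (erF (insF t x hxt) x hxins).1 = t.1 := by
      show (insert x t.1).erase x = t.1
      exact Finset.erase_insert hxt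
    rw [faceApp_congr k e hface]
    have h6 : vIdx ((insF t x hxt).1 : Finset V) x = vIdx (insert x t.1) x := rfl
    rw [h6, ← mul_assoc, vIdx_sq, one_mul]

lemma bdry_coneC_zero (x : V) (e : ChSp k V 0) :
    bdry k 0 (coneC k x e) = e := by
  apply Finsupp.ext
  intro t
  have ht : t.1 = ∅ := Finset.card_eq_zero.1 t.2
  rw [bdry_apply]
  rw [Finset.sum_eq_single x (fun y _ hyx => by
      by_cases hyt : y ∈ t.1
      · rw [dif_pos hyt]
      · rw [dif_neg hyt]
        have : x ∉ (insF t y hyt).1 := by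
          intro hc
          rcases Finset.mem_insert.1 hc with h | h
          · exact hyx h.symm
          · rw [ht] at h; exact absurd h (Finset.notMem_empty x)
        rw [coneC_apply_neg k x e _ this, mul_zero])
    (fun h => absurd (Finset.mem_univ x) h)]
  have hxt : x ∉ t.1 := by rw [ht]; exact Finset.notMem_empty x
  rw [dif_neg hxt]
  have hxins : x ∈ (insF t x hxt).1 := Finset.mem_insert_self _ _
  rw [coneC_apply_pos k x e _ hxins]
  have hface : (erF (insF t x hxt) x hxins).1 = t.1 := by
    show (insert x t.1).erase x = t.1
    exact Finset.erase_insert hxt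
  rw [faceApp_congr k e hface]
  have h6 : vIdx ((insF t x hxt).1 : Finset V) x = vIdx (insert x t.1) x := rfl
  rw [h6, ← mul_assoc, vIdx_sq, one_mul]

/-- Restriction of a chain to faces satisfying a predicate. -/
noncomputable def resC (P : Finset V → Prop) {n : ℕ} (c : ChSp k V n) : ChSp k V n :=
  mkCh k fun s => if P s.1 then c s else 0

lemma resC_apply (P : Finset V → Prop) {n : ℕ} (c : ChSp k V n) (s) :
    resC k P c s = if P s.1 then c s else 0 := rfl

lemma mem_suppIn_iff {n : ℕ} (K : Finset (Finset V)) (c : ChSp k V n) :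
    c ∈ suppIn k K n ↔ ∀ s, c s ≠ 0 → s.1 ∈ K := by
  constructor
  · intro h s hs
    exact h s (Finsupp.mem_support_iff.2 hs)
  · intro h s hs
    exact h s (Finsupp.mem_support_iff.1 hs)

lemma bdry_mem_suppIn {K : Finset (Finset V)} (hK : DownClosed K) {n : ℕ}
    {c : ChSp k V (n + 1)} (hc : c ∈ suppIn k K (n + 1)) :
    bdry k n c ∈ suppIn k K n := by
  rw [mem_suppIn_iff] at hc ⊢
  intro t ht
  rw [bdry_apply] at ht
  obtain ⟨y, -, hy⟩ := Finset.exists_ne_zero_of_sum_ne_zero ht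
  by_cases hyt : y ∈ t.1
  · rw [dif_pos hyt] at hy
    exact absurd rfl hy
  · rw [dif_neg hyt] at hy
    have : c (insF t y hyt) ≠ 0 := by
      intro h0
      rw [h0, mul_zero] at hy
      exact hy rfl
    exact hK t.1 (insert y t.1) (hc _ this) (Finset.subset_insert _ _)

lemma coneC_mem_suppIn {K : Finset (Finset V)} {x : V} {n : ℕ} {a : ChSp k V n}
    (ha : a ∈ suppIn k (linkC K {x}) n) :
    coneC k x a ∈ suppIn k K (n + 1) := by
  rw [mem_suppIn_iff] at ha ⊢
  intro s hs
  by_cases hx : x ∈ s.1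
  · rw [coneC_apply_pos k x a s hx] at hs
    have ha' : a (erF s x hx) ≠ 0 := by
      intro h0
      rw [h0, mul_zero] at hs
      exact hs rfl
    have := ha _ ha'
    simp only [linkC, Finset.mem_filter] at this
    have h2 := this.2.2
    show s.1 ∈ K
    have : (erF s x hx).1 ∪ {x} = s.1 := by
      show s.1.erase x ∪ {x} = s.1
      rw [Finset.union_comm, ← Finset.insert_eq, Finset.insert_erase hx]
    rwa [this] at h2
  · rw [coneC_apply_neg k x a s hx] at hs
    exact absurd rfl hs

lemma unconeC_mem_suppIn {K : Finset (Finset V)} {x : V} {n : ℕ} {c : ChSp k V (n + 1)}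
    (hc : c ∈ suppIn k K (n + 1)) :
    unconeC k x c ∈ suppIn k (linkC K {x}) n := by
  rw [mem_suppIn_iff] at hc ⊢
  intro γ hγ
  by_cases hx : x ∈ γ.1
  · rw [unconeC_apply_neg k x c γ hx] at hγ
    exact absurd rfl hγ
  · rw [unconeC_apply_pos k x c γ hx] at hγ
    have hc' : c (insF γ x hx) ≠ 0 := by
      intro h0
      rw [h0, mul_zero] at hγ
      exact hγ rfl
    have hK := hc _ hc'
    simp only [linkC, Finset.mem_filter]
    refine ⟨Finset.mem_univ _, Finset.disjoint_singleton_right.2 hx, ?_⟩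
    rwa [Finset.union_comm, ← Finset.insert_eq]

lemma resC_mem_suppIn_delV {K : Finset (Finset V)} (U : Finset V) {n : ℕ} {c : ChSp k V n}
    (hc : c ∈ suppIn k K n) :
    resC k (fun f => Disjoint f U) c ∈ suppIn k (delV K U) n := by
  rw [mem_suppIn_iff] at hc ⊢
  intro s hs
  rw [resC_apply] at hs
  by_cases hd : Disjoint s.1 U
  · rw [if_pos hd] at hs
    simp only [delV, Finset.mem_filter]
    exact ⟨hc s hs, hd⟩
  · rw [if_neg hd] at hs
    exact absurd rfl hs

/-- Decomposition of a chain along a transversal vertex set. -/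
lemma chain_decomp {n : ℕ} (U : Finset V) (c : ChSp k V (n + 1))
    (hle : ∀ s, c s ≠ 0 → ((s.1 : Finset V) ∩ U).card ≤ 1) :
    c = resC k (fun f => Disjoint f U) c + ∑ u ∈ U, coneC k u (unconeC k u c) := by
  apply Finsupp.ext
  intro s
  rw [Finsupp.add_apply, Finsupp.finset_sum_apply, resC_apply]
  have hterm : ∀ u ∈ U, coneC k u (unconeC k u c) s = if u ∈ s.1 then c s else 0 :=
    fun u _ => coneC_unconeC_apply k u c s
  rw [Finset.sum_congr rfl hterm]
  by_cases hcs : c s = 0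
  · rw [hcs]
    simp
  · by_cases hd : Disjoint s.1 U
    · rw [if_pos hd]
      rw [Finset.sum_eq_zero (fun u hu => by
        rw [if_neg (fun hc => Finset.disjoint_left.1 hd hc hu)]), add_zero]
    · rw [if_neg hd]
      obtain ⟨u₀, hu₀⟩ := Finset.not_disjoint_iff.1 hd
      have hinter : s.1 ∩ U = {u₀} := by
        apply Finset.eq_singleton_iff_unique_mem.2
        refine ⟨Finset.mem_inter.2 ⟨hu₀.1, hu₀.2⟩, ?_⟩
        intro w hw
        by_contra hwu
        have h2 : ({w, u₀} : Finset V) ⊆ s.1 ∩ U := by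
          intro z hz
          rcases Finset.mem_insert.1 hz with rfl | hz
          · exact hw
          · rw [Finset.mem_singleton.1 hz]
            exact Finset.mem_inter.2 ⟨hu₀.1, hu₀.2⟩
        have h3 : ({w, u₀} : Finset V).card = 2 := Finset.card_pair hwu
        have h4 := Finset.card_le_card h2
        rw [h3] at h4
        have h5 := hle s hcs
        exact absurd (le_trans h4 h5) (by norm_num)
      have : ∀ u ∈ U, (if u ∈ s.1 then c s else 0) = if u = u₀ then c s else 0 := by
        intro u hu
        by_cases he : u = u₀
        · subst he
          rw [if_pos hu₀.1, if_pos rfl]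
        · rw [if_neg he, if_neg]
          intro hus
          apply he
          have : u ∈ s.1 ∩ U := Finset.mem_inter.2 ⟨hus, hu⟩
          rw [hinter] at this
          exact Finset.mem_singleton.1 this
      rw [Finset.sum_congr rfl this, Finset.sum_ite_eq' U u₀ (fun _ => c s), if_pos hu₀.2,
        zero_add]

lemma sum_coneC_apply {n : ℕ} (U : Finset V) (F : V → ChSp k V n) (u' : V) (hu' : u' ∈ U)
    (γ : {s : Finset V // s.card = n}) (hγ : Disjoint γ.1 U) (hins : u' ∉ γ.1) :
    (∑ u ∈ U, coneC k u (F u)) (insF γ u' hins)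
      = (-1 : k) ^ vIdx (insert u' γ.1) u' * F u' γ := by
  rw [Finsupp.finset_sum_apply]
  rw [Finset.sum_eq_single_of_mem u' hu' (fun u hu hne => by
    apply coneC_apply_neg
    intro hc
    rcases Finset.mem_insert.1 hc with h | h
    · exact hne h
    · exact Finset.disjoint_left.1 hγ h hu)]
  have hmem : u' ∈ (insF γ u' hins).1 := Finset.mem_insert_self _ _
  rw [coneC_apply_pos k u' (F u') _ hmem]
  have hface : (erF (insF γ u' hins) u' hmem).1 = γ.1 := by
    show (insert u' γ.1).erase u' = γ.1
    exact Finset.erase_insert hins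
  rw [faceApp_congr k (F u') hface]
  rfl

lemma suppIn_apply_eq_zero {n : ℕ} {K : Finset (Finset V)} {c : ChSp k V n}
    (hc : c ∈ suppIn k K n) (s) (hs : s.1 ∉ K) : c s = 0 := by
  by_contra h
  exact hs ((mem_suppIn_iff k K c).1 hc s h)

lemma neg_one_pow_mul_cancel {m : ℕ} {a b : k}
    (h : (-1 : k) ^ m * a = (-1 : k) ^ m * b) : a = b := by
  have := congrArg (fun z => (-1 : k) ^ m * z) h
  rwa [← mul_assoc, ← mul_assoc, negOne_pow_mul_self, one_mul, one_mul] at this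
  
end ChainInfra

section Comb

open scoped Classical

variable {V : Type*} [Fintype V]

lemma mem_delV {K : Finset (Finset V)} {U : Finset V} {s : Finset V} :
    s ∈ delV K U ↔ s ∈ K ∧ Disjoint s U := by
  simp [delV]

lemma mem_linkC {K : Finset (Finset V)} {σ γ : Finset V} :
    γ ∈ linkC K σ ↔ Disjoint γ σ ∧ γ ∪ σ ∈ K := by
  simp [linkC]

lemma linkC_empty (K : Finset (Finset V)) : linkC K ∅ = K := by
  ext γ
  simp [mem_linkC]

lemma downClosed_linkC {K : Finset (Finset V)} (hK : DownClosed K) (σ : Finset V) :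
    DownClosed (linkC K σ) := by
  intro s t ht hst
  rw [mem_linkC] at ht ⊢
  refine ⟨Finset.disjoint_of_subset_left hst ht.1, ?_⟩
  exact hK (s ∪ σ) (t ∪ σ) ht.2 (Finset.union_subset_union_left hst)

lemma downClosed_delV {K : Finset (Finset V)} (hK : DownClosed K) (U : Finset V) :
    DownClosed (delV K U) := by
  intro s t ht hst
  rw [mem_delV] at ht ⊢
  exact ⟨hK s t ht.1 hst, Finset.disjoint_of_subset_left hst ht.2⟩

lemma linkC_linkC {K : Finset (Finset V)} {σ τ : Finset V} (hd : Disjoint τ σ) :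
    linkC (linkC K σ) τ = linkC K (σ ∪ τ) := by
  ext γ
  simp only [mem_linkC, Finset.disjoint_union_right, Finset.disjoint_union_left]
  constructor
  · rintro ⟨h1, h2, h3⟩
    refine ⟨⟨h2.1, h1⟩, ?_⟩
    have : γ ∪ τ ∪ σ = γ ∪ (σ ∪ τ) := by
      rw [Finset.union_assoc, Finset.union_comm τ σ]
    rwa [this] at h3
  · rintro ⟨⟨h1, h2⟩, h3⟩
    refine ⟨h2, ⟨h1, hd⟩, ?_⟩
    have : γ ∪ τ ∪ σ = γ ∪ (σ ∪ τ) := by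
      rw [Finset.union_assoc, Finset.union_comm τ σ]
    rwa [this]

lemma delV_linkC {K : Finset (Finset V)} {σ U : Finset V} (hd : Disjoint σ U) :
    delV (linkC K σ) U = linkC (delV K U) σ := by
  ext γ
  simp only [mem_delV, mem_linkC, Finset.disjoint_union_left]
  tauto

lemma delV_delV {K : Finset (Finset V)} {U W : Finset V} :
    delV (delV K U) W = delV K (U ∪ W) := by
  ext γ
  simp only [mem_delV, Finset.disjoint_union_right]
  tauto

lemma exists_facet {K : Finset (Finset V)} {s : Finset V} (hs : s ∈ K) :
    ∃ F, IsFacet K F ∧ s ⊆ F := by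
  obtain ⟨F, hF, hmax⟩ := Finset.exists_maximal (s := K.filter (fun t => s ⊆ t))
    ⟨s, Finset.mem_filter.2 ⟨hs, Finset.Subset.refl s⟩⟩
  refine ⟨F, ⟨(Finset.mem_filter.1 hF).1, ?_⟩, (Finset.mem_filter.1 hF).2⟩
  intro t ht hFt
  by_contra hne
  exact hne (le_antisymm hFt
    (hmax (Finset.mem_filter.2 ⟨ht, ((Finset.mem_filter.1 hF).2).trans hFt⟩) hFt))

lemma face_card_le {K : Finset (Finset V)} {d : ℕ} (hpure : PureCard K d) {s : Finset V}
    (hs : s ∈ K) : s.card ≤ d := by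
  obtain ⟨F, hF, hsF⟩ := exists_facet hs
  rw [← hpure F hF]
  exact Finset.card_le_card hsF

lemma facet_of_card_eq {K : Finset (Finset V)} {d : ℕ} (hpure : PureCard K d) {s : Finset V}
    (hs : s ∈ K) (hcard : s.card = d) : IsFacet K s := by
  refine ⟨hs, fun t ht hst => ?_⟩
  apply Finset.eq_of_subset_of_card_le hst
  rw [hcard]
  exact face_card_le hpure ht

lemma inter_card_le_one {K : Finset (Finset V)} {U : Finset V}
    (hU : ∀ s, IsFacet K s → (s ∩ U).card = 1) {s : Finset V} (hs : s ∈ K) :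
    (s ∩ U).card ≤ 1 := by
  obtain ⟨F, hF, hsF⟩ := exists_facet hs
  rw [← hU F hF]
  exact Finset.card_le_card (Finset.inter_subset_inter_right hsF)

lemma link_face_disjU {K : Finset (Finset V)} {U : Finset V}
    (hU : ∀ s, IsFacet K s → (s ∩ U).card = 1) {u : V} (hu : u ∈ U) {γ : Finset V}
    (hγ : γ ∈ linkC K {u}) : Disjoint γ U := by
  rw [mem_linkC] at hγ
  rw [Finset.disjoint_left]
  intro w hwγ hwU
  have hwu : w ≠ u := fun heq => Finset.disjoint_left.1 hγ.1 hwγ (Finset.mem_singleton.2 heq)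
  have hsub : ({w, u} : Finset V) ⊆ (γ ∪ {u}) ∩ U := by
    intro z hz
    rcases Finset.mem_insert.1 hz with rfl | hz
    · exact Finset.mem_inter.2 ⟨Finset.mem_union_left _ hwγ, hwU⟩
    · rw [Finset.mem_singleton.1 hz]
      exact Finset.mem_inter.2 ⟨Finset.mem_union_right _ (Finset.mem_singleton_self u), hu⟩
  have h2 := Finset.card_le_card hsub
  rw [Finset.card_pair hwu] at h2
  have h3 := inter_card_le_one hU hγ.2
  omega

lemma isFacet_union_of_isFacet_link {K : Finset (Finset V)} (hK : DownClosed K)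
    {σ G : Finset V} (hG : IsFacet (linkC K σ) G) : IsFacet K (G ∪ σ) := by
  have hGl := hG.1
  rw [mem_linkC] at hGl
  refine ⟨hGl.2, fun t ht hsub => ?_⟩
  have hσt : σ ⊆ t := (Finset.subset_union_right).trans hsub
  have htσ : t \ σ ∈ linkC K σ := by
    rw [mem_linkC]
    refine ⟨Finset.sdiff_disjoint, ?_⟩
    rwa [Finset.sdiff_union_of_subset hσt]
  have hGt : G ⊆ t \ σ := by
    intro w hw
    rw [Finset.mem_sdiff]
    exact ⟨hsub (Finset.mem_union_left _ hw),
      fun hwσ => Finset.disjoint_left.1 hGl.1 hw hwσ⟩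
  have := hG.2 (t \ σ) htσ hGt
  rw [this, Finset.sdiff_union_of_subset hσt]

lemma pure_link {K : Finset (Finset V)} {d : ℕ} (hK : DownClosed K) (hpure : PureCard K d)
    {σ : Finset V} : PureCard (linkC K σ) (d - σ.card) := by
  intro G hG
  have h1 := isFacet_union_of_isFacet_link hK hG
  have h2 := hpure _ h1
  have hGl := hG.1
  rw [mem_linkC] at hGl
  rw [Finset.card_union_of_disjoint hGl.1] at h2
  omega

lemma trans_link {K : Finset (Finset V)} {U : Finset V} (hK : DownClosed K)
    (hU : ∀ s, IsFacet K s → (s ∩ U).card = 1) {σ : Finset V} (hσU : Disjoint σ U) :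
    ∀ G, IsFacet (linkC K σ) G → (G ∩ U).card = 1 := by
  intro G hG
  have h1 := isFacet_union_of_isFacet_link hK hG
  have h2 := hU _ h1
  rw [Finset.union_inter_distrib_right, Finset.disjoint_iff_inter_eq_empty.1 hσU,
    Finset.union_empty] at h2
  exact h2

lemma sup_card_eq {K : Finset (Finset V)} {d : ℕ} (hpure : PureCard K d) (hne : K.Nonempty) :
    K.sup Finset.card = d := by
  obtain ⟨s, hs⟩ := hne
  obtain ⟨F, hF, -⟩ := exists_facet hs
  apply le_antisymm
  · exact Finset.sup_le (fun s hs => face_card_le hpure hs)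
  · rw [← hpure F hF]
    exact Finset.le_sup hF.1

lemma sup_card_delV_eq {K : Finset (Finset V)} {d : ℕ} {U : Finset V} (hK : DownClosed K)
    (hpure : PureCard K d) (hU : ∀ s, IsFacet K s → (s ∩ U).card = 1)
    (hne : K.Nonempty) :
    (delV K U).sup Finset.card = d - 1 := by
  obtain ⟨s, hs⟩ := hne
  obtain ⟨F, hF, -⟩ := exists_facet hs
  apply le_antisymm
  · apply Finset.sup_le
    intro t ht
    rw [mem_delV] at ht
    obtain ⟨G, hG, htG⟩ := exists_facet ht.1
    obtain ⟨u, hu⟩ := Finset.card_eq_one.1 (hU G hG)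
    have hut : u ∉ t := by
      intro huT
      have : u ∈ t ∩ U := by
        have huU : u ∈ U := by
          have : u ∈ G ∩ U := hu ▸ Finset.mem_singleton_self u
          exact (Finset.mem_inter.1 this).2
        exact Finset.mem_inter.2 ⟨huT, huU⟩
      exact Finset.disjoint_left.1 ht.2 (Finset.mem_inter.1 this).1
        (Finset.mem_inter.1 this).2
    have : t ⊆ G.erase u := Finset.subset_erase.2 ⟨htG, hut⟩
    have h2 := Finset.card_le_card this
    rw [Finset.card_erase_of_mem, hpure G hG] at h2
    · exact h2
    · have : u ∈ G ∩ U := hu ▸ Finset.mem_singleton_self u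
      exact (Finset.mem_inter.1 this).1
  · obtain ⟨u, hu⟩ := Finset.card_eq_one.1 (hU F hF)
    have huF : u ∈ F := by
      have : u ∈ F ∩ U := hu ▸ Finset.mem_singleton_self u
      exact (Finset.mem_inter.1 this).1
    have hmem : F.erase u ∈ delV K U := by
      rw [mem_delV]
      refine ⟨hK _ _ hF.1 (Finset.erase_subset _ _), ?_⟩
      rw [Finset.disjoint_left]
      intro w hw hwU
      have hwF : w ∈ F := Finset.mem_of_mem_erase hw
      have : w ∈ F ∩ U := Finset.mem_inter.2 ⟨hwF, hwU⟩
      rw [hu] at this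
      exact (Finset.mem_erase.1 hw).1 (Finset.mem_singleton.1 this)
    have := Finset.le_sup (f := Finset.card) hmem
    rw [Finset.card_erase_of_mem huF, hpure F hF] at this
    exact this

lemma linkC_subset_delV {K : Finset (Finset V)} {U : Finset V} (hK : DownClosed K)
    (hU : ∀ s, IsFacet K s → (s ∩ U).card = 1) {u : V} (hu : u ∈ U) :
    linkC K {u} ⊆ delV K U := by
  intro γ hγ
  rw [mem_delV]
  have hγ' := hγ
  rw [mem_linkC] at hγ'
  exact ⟨hK γ (γ ∪ {u}) hγ'.2 Finset.subset_union_left, link_face_disjU hU hu hγ⟩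

lemma linkC_of_not_mem {K : Finset (Finset V)} (hK : DownClosed K) {τ : Finset V}
    (hτ : τ ∉ K) : linkC K τ = ∅ := by
  rw [Finset.eq_empty_iff_forall_notMem]
  intro γ hγ
  rw [mem_linkC] at hγ
  exact hτ (hK τ (γ ∪ τ) hγ.2 Finset.subset_union_right)

end Comb

section Vanish

open scoped Classical

variable (k : Type*) [Field k] {V : Type*} [Fintype V]

lemma suppIn_mono {K K' : Finset (Finset V)} (h : K ⊆ K') (n : ℕ) :
    suppIn k K n ≤ suppIn k K' n := by
  intro c hc
  rw [mem_suppIn_iff] at hc ⊢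
  exact fun s hs => h (hc s hs)

lemma delV_subset (K : Finset (Finset V)) (U : Finset V) : delV K U ⊆ K := by
  intro s hs
  exact (mem_delV.1 hs).1

lemma hv_elim {K : Finset (Finset V)} {m : ℕ} (h : HVanish k K ((m : ℤ) - 1)) :
    zcyc k K m ≤ zbnd k K m := by
  unfold HVanish at h
  rw [if_neg (by omega)] at h
  have he : ((m : ℤ) - 1 + 1).toNat = m := by omega
  rwa [he] at h

lemma hv_intro {K : Finset (Finset V)} (i : ℤ)
    (h : ∀ m : ℕ, (m : ℤ) = i + 1 → zcyc k K m ≤ zbnd k K m) : HVanish k K i := by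
  unfold HVanish
  split
  · trivial
  · rename_i hni
    exact h (i + 1).toNat (by omega)

lemma zcyc_le_suppIn (K : Finset (Finset V)) (n : ℕ) : zcyc k K n ≤ suppIn k K n := by
  match n with
  | 0 => exact le_refl _
  | m + 1 => exact inf_le_left

lemma coneC_zero (x : V) (n : ℕ) : coneC k x (0 : ChSp k V n) = 0 := by
  apply Finsupp.ext
  intro s
  by_cases hx : x ∈ s.1
  · rw [coneC_apply_pos k x _ s hx]
    simp
  · rw [coneC_apply_neg k x _ s hx]
    simp

lemma HVanish_empty (i : ℤ) : HVanish k (∅ : Finset (Finset V)) i := by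
  apply hv_intro
  intro m _
  intro c hc
  have hc' := zcyc_le_suppIn k ∅ m hc
  have : c = 0 := by
    apply Finsupp.ext
    intro s
    by_contra h
    exact absurd ((mem_suppIn_iff k ∅ c).1 hc' s h) (Finset.notMem_empty _)
  rw [this]
  exact Submodule.zero_mem _

/-- Hypothesis bundle for the deletion lemmas: `L` is a pure `(d-1)`-dimensional
downward closed complex, `U` meets every facet exactly once, `L` is CM at the empty
face and the links of vertices of `U` are CM at their empty faces. -/
structure DelSetting (k : Type*) [Field k] {V : Type*} [Fintype V]
    (L : Finset (Finset V)) (U : Finset V) (d : ℕ) : Prop where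
  down : DownClosed L
  empty_mem : ∅ ∈ L
  pure : PureCard L d
  trans : ∀ s, IsFacet L s → (s ∩ U).card = 1
  hv : ∀ i : ℤ, i < (d : ℤ) - 1 → HVanish k L i
  hvlink : ∀ u ∈ U, ∀ i : ℤ, i < (d : ℤ) - 2 → HVanish k (linkC L {u}) i

namespace DelSetting

variable {k : Type*} [Field k] {V : Type*} [Fintype V]
variable {L : Finset (Finset V)} {U : Finset V} {d : ℕ}

lemma delV_nonempty (S : DelSetting k L U d) : ∅ ∈ delV L U := by
  rw [mem_delV]
  exact ⟨S.empty_mem, Finset.disjoint_empty_left U⟩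

lemma exists_face_delV (S : DelSetting k L U d) :
    ∃ t ∈ delV L U, t.card = d - 1 := by
  have hsup := sup_card_delV_eq S.down S.pure S.trans ⟨∅, S.empty_mem⟩
  obtain ⟨t, htm, htc⟩ := Finset.exists_mem_eq_sup (delV L U) ⟨∅, S.delV_nonempty⟩
    Finset.card
  exact ⟨t, htm, by rw [← htc, hsup]⟩

lemma vertex_exists (S : DelSetting k L U d) (hd : 2 ≤ d) :
    ∃ v : V, {v} ∈ delV L U := by
  obtain ⟨t, htm, htc⟩ := S.exists_face_delV
  have : t.Nonempty := by
    rw [← Finset.card_pos, htc]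
    omega
  obtain ⟨v, hv⟩ := this
  exact ⟨v, downClosed_delV S.down U {v} t htm (Finset.singleton_subset_iff.2 hv)⟩

lemma P0core (S : DelSetting k L U d) :
    ∀ n : ℕ, (n : ℤ) ≤ (d : ℤ) - 2 → zcyc k (delV L U) n ≤ zbnd k (delV L U) n := by
  intro n hn
  match n with
  | 0 =>
    intro c hc
    have hc' : c ∈ suppIn k (delV L U) 0 := hc
    have hd2 : 2 ≤ d := by omega
    obtain ⟨v, hv⟩ := S.vertex_exists hd2
    refine Submodule.mem_map.2 ⟨coneC k v c, ?_, bdry_coneC_zero k v c⟩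
    apply coneC_mem_suppIn
    rw [mem_suppIn_iff] at hc' ⊢
    intro s hs
    have hse : s.1 = ∅ := Finset.card_eq_zero.1 s.2
    rw [mem_linkC, hse]
    refine ⟨Finset.disjoint_empty_left _, ?_⟩
    rwa [Finset.empty_union]
  | m + 1 =>
    intro c hc
    have hc' : c ∈ suppIn k (delV L U) (m + 1) ⊓ LinearMap.ker (bdry k m) := hc
    obtain ⟨hc1, hc2⟩ := Submodule.mem_inf.1 hc'
    have hcL : c ∈ zcyc k L (m + 1) :=
      Submodule.mem_inf.2 ⟨suppIn_mono k (delV_subset L U) _ hc1, hc2⟩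
    have h1 : HVanish k L ((((m + 1 : ℕ)) : ℤ) - 1) := S.hv _ (by push_cast; omega)
    obtain ⟨b, hbmem, hbc⟩ := Submodule.mem_map.1 (hv_elim k h1 hcL)
    set a : V → ChSp k V (m + 1) := fun u => unconeC k u b with ha_def
    set b₀ : ChSp k V (m + 2) := resC k (fun f => Disjoint f U) b with hb₀_def
    have hble : ∀ s : {s : Finset V // s.card = m + 2}, b s ≠ 0 → (s.1 ∩ U).card ≤ 1 :=
      fun s hs => inter_card_le_one S.trans ((mem_suppIn_iff k L b).1 hbmem s hs)
    have hdecomp := chain_decomp k U b hble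
    have hafree : ∀ u, ∀ s, a u s ≠ 0 → u ∉ s.1 := by
      intro u s hs hx
      exact hs (unconeC_apply_neg k u b s hx)
    have hsplit : c = bdry k (m + 1) b₀ +
        ∑ u ∈ U, (a u - coneC k u (bdry k m (a u))) := by
      conv_lhs => rw [← hbc, hdecomp]
      rw [map_add, map_sum]
      congr 1
      apply Finset.sum_congr rfl
      intro u _
      exact bdry_coneC k u (a u) (hafree u)
    have haU : ∀ u ∈ U, a u ∈ suppIn k (delV (linkC L {u}) U) (m + 1) := by
      intro u hu
      have h1 : a u ∈ suppIn k (linkC L {u}) (m + 1) := unconeC_mem_suppIn k hbmem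
      rw [mem_suppIn_iff] at h1 ⊢
      intro γ hγ
      rw [mem_delV]
      exact ⟨h1 γ hγ, link_face_disjU S.trans hu (h1 γ hγ)⟩
    have hb₀m : b₀ ∈ suppIn k (delV L U) (m + 2) := resC_mem_suppIn_delV k U hbmem
    have hdb₀ : bdry k (m + 1) b₀ ∈ suppIn k (delV L U) (m + 1) :=
      bdry_mem_suppIn k (downClosed_delV S.down U) hb₀m
    have hE : ∑ u ∈ U, coneC k u (bdry k m (a u))
        = (bdry k (m + 1) b₀ + ∑ u ∈ U, a u) - c := by
      rw [hsplit, Finset.sum_sub_distrib]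
      abel
    have hza : ∀ u ∈ U, bdry k m (a u) = 0 := by
      intro u hu
      have hsupp : bdry k m (a u) ∈ suppIn k (delV (linkC L {u}) U) m :=
        bdry_mem_suppIn k (downClosed_delV (downClosed_linkC S.down _) U) (haU u hu)
      apply Finsupp.ext
      intro γ
      rw [Finsupp.coe_zero, Pi.zero_apply]
      by_cases hdU : Disjoint γ.1 U
      · have hins : u ∉ γ.1 := fun hcm => Finset.disjoint_left.1 hdU hcm hu
        have hval := congrArg (fun f : ChSp k V (m + 1) => f (insF γ u hins)) hE
        rw [sum_coneC_apply k U (fun u => bdry k m (a u)) u hu γ hdU hins] at hval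
        have hnotmem : (insF γ u hins).1 ∉ delV L U := by
          rw [mem_delV]
          rintro ⟨-, hdisj⟩
          exact Finset.disjoint_left.1 hdisj (Finset.mem_insert_self u γ.1) hu
        have e1 : bdry k (m + 1) b₀ (insF γ u hins) = 0 :=
          suppIn_apply_eq_zero k hdb₀ _ hnotmem
        have e2 : c (insF γ u hins) = 0 := suppIn_apply_eq_zero k hc1 _ hnotmem
        have e3 : ∀ u' ∈ U, a u' (insF γ u hins) = 0 := by
          intro u' hu'
          apply suppIn_apply_eq_zero k (haU u' hu')
          rw [mem_delV]
          rintro ⟨-, hdisj⟩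
          exact Finset.disjoint_left.1 hdisj (Finset.mem_insert_self u γ.1) hu
        rw [Finsupp.sub_apply, Finsupp.add_apply, Finsupp.finset_sum_apply,
          e1, e2, Finset.sum_eq_zero e3] at hval
        simp only [add_zero, zero_add, sub_zero, zero_sub, sub_self] at hval
        have hpow : ((-1 : k) ^ vIdx (insert u γ.1) u) ≠ 0 :=
          pow_ne_zero _ (neg_ne_zero.2 one_ne_zero)
        rcases mul_eq_zero.1 hval with h | h
        · exact absurd h hpow
        · exact h
      · exact suppIn_apply_eq_zero k hsupp γ
          (by rw [mem_delV]; rintro ⟨-, h⟩; exact hdU h)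
    have hc_eq : c = bdry k (m + 1) b₀ + ∑ u ∈ U, a u := by
      rw [hsplit]
      congr 1
      apply Finset.sum_congr rfl
      intro u hu
      rw [hza u hu, coneC_zero, sub_zero]
    have hex : ∀ u, u ∈ U → ∃ cu : ChSp k V (m + 2),
        cu ∈ suppIn k (linkC L {u}) (m + 2) ∧ bdry k (m + 1) cu = a u := by
      intro u hu
      have hcyc : a u ∈ zcyc k (linkC L {u}) (m + 1) :=
        Submodule.mem_inf.2 ⟨unconeC_mem_suppIn k hbmem,
          LinearMap.mem_ker.2 (hza u hu)⟩
      have hvl : HVanish k (linkC L {u}) ((((m + 1 : ℕ)) : ℤ) - 1) :=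
        S.hvlink u hu _ (by push_cast; omega)
      exact Submodule.mem_map.1 (hv_elim k hvl hcyc)
    choose! cu hcu1 hcu2 using hex
    refine Submodule.mem_map.2 ⟨b₀ + ∑ u ∈ U, cu u, ?_, ?_⟩
    · apply Submodule.add_mem _ hb₀m
      apply Submodule.sum_mem
      intro u hu
      exact suppIn_mono k (linkC_subset_delV S.down S.trans hu) _ (hcu1 u hu)
    · rw [map_add, map_sum, hc_eq]
      congr 1
      apply Finset.sum_congr rfl
      intro u hu
      exact hcu2 u hu

lemma P0 (S : DelSetting k L U d) :
    ∀ i : ℤ, i < (d : ℤ) - 2 → HVanish k (delV L U) i := by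
  intro i hi
  apply hv_intro
  intro m hm
  exact S.P0core m (by omega)

end DelSetting

end Vanish

section Connect

open scoped Classical

variable (k : Type*) [Field k] {V : Type*} [Fintype V]

/-- Reachability along edges of a complex. -/
def PReach (Γ : Finset (Finset V)) (x y : V) : Prop :=
  Relation.ReflTransGen (fun a b => ({a, b} : Finset V) ∈ Γ) x y

attribute [local instance] vOrd

noncomputable local instance (priority := high) : DecidableEq V := Classical.decEq V

lemma vIdx_pair_sum (v z : V) (h : v ≠ z) : vIdx {v, z} v + vIdx {v, z} z = 1 := by
  have hv : v ∈ ({v, z} : Finset V) := Finset.mem_insert_self _ _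
  have hz : z ∈ ({v, z} : Finset V) := Finset.mem_insert_of_mem (Finset.mem_singleton_self _)
  rw [vIdx_eq_count _ v hv, vIdx_eq_count _ z hz]
  rcases lt_or_gt_of_ne h with hlt | hlt
  · have h1 : ({v, z} : Finset V).filter (fun w => w < v) = ∅ := by
      rw [Finset.eq_empty_iff_forall_notMem]
      intro w hw
      rcases Finset.mem_insert.1 (Finset.mem_filter.1 hw).1 with rfl | hw2
      · exact lt_irrefl _ (Finset.mem_filter.1 hw).2
      · rw [Finset.mem_singleton.1 hw2] at hw
        exact absurd (Finset.mem_filter.1 hw).2 (not_lt.2 hlt.le)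
    have h2 : ({v, z} : Finset V).filter (fun w => w < z) = {v} := by
      ext w
      simp only [Finset.mem_filter, Finset.mem_insert, Finset.mem_singleton]
      constructor
      · rintro ⟨rfl | rfl, hlt2⟩
        · rfl
        · exact absurd hlt2 (lt_irrefl _)
      · rintro rfl
        exact ⟨Or.inl rfl, hlt⟩
    rw [h1, h2]
    simp
  · have h1 : ({v, z} : Finset V).filter (fun w => w < z) = ∅ := by
      rw [Finset.eq_empty_iff_forall_notMem]
      intro w hw
      rcases Finset.mem_insert.1 (Finset.mem_filter.1 hw).1 with rfl | hw2
      · exact absurd (Finset.mem_filter.1 hw).2 (not_lt.2 hlt.le)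
      · rw [Finset.mem_singleton.1 hw2] at hw
        exact lt_irrefl _ (Finset.mem_filter.1 hw).2
    have h2 : ({v, z} : Finset V).filter (fun w => w < v) = {z} := by
      ext w
      simp only [Finset.mem_filter, Finset.mem_insert, Finset.mem_singleton]
      constructor
      · rintro ⟨rfl | rfl, hlt2⟩
        · exact absurd hlt2 (lt_irrefl _)
        · rfl
      · rintro rfl
        exact ⟨Or.inr rfl, hlt⟩
    rw [h1, h2]
    simp

lemma negpow_sum_zero {a b : ℕ} (h : a + b = 1) : (-1 : k) ^ a + (-1 : k) ^ b = 0 := by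
  cases a with
  | zero =>
    have hb : b = 1 := by simpa using h
    subst hb
    norm_num
  | succ a' =>
    rw [Nat.succ_add] at h
    have h' : a' + b = 0 := Nat.succ_injective h
    have ha' : a' = 0 := Nat.eq_zero_of_add_eq_zero_right h'
    have hb : b = 0 := Nat.eq_zero_of_add_eq_zero_left h'
    subst ha'; subst hb
    norm_num

lemma connectivity {Γ : Finset (Finset V)} (h0 : HVanish k Γ 0)
    {x y : V} (hx : {x} ∈ Γ) (hy : {y} ∈ Γ) : PReach Γ x y := by
  by_cases hxy : x = y
  · subst hxy
    exact Relation.ReflTransGen.refl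
  by_contra hR
  set c : ChSp k V 1 := mkCh k (fun s => if s.1 = {x} then 1 else if s.1 = {y} then -1 else 0)
    with hc_def
  have hcmem : c ∈ suppIn k Γ 1 := by
    rw [mem_suppIn_iff]
    intro s hs
    rw [hc_def, mkCh_apply] at hs
    by_cases h1 : s.1 = {x}
    · rw [h1]; exact hx
    · rw [if_neg h1] at hs
      by_cases h2 : s.1 = {y}
      · rw [h2]; exact hy
      · rw [if_neg h2] at hs; exact absurd rfl hs
  have hcyc : c ∈ zcyc k Γ 1 := by
    refine Submodule.mem_inf.2 ⟨hcmem, LinearMap.mem_ker.2 ?_⟩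
    apply Finsupp.ext
    intro t
    rw [Finsupp.coe_zero, Pi.zero_apply, bdry_apply]
    have hte : t.1 = ∅ := Finset.card_eq_zero.1 t.2
    have hterm : ∀ z : V, (if h : z ∈ t.1 then 0 else
        (-1 : k) ^ vIdx (insert z t.1) z * c (insF t z h))
        = (if z = x then (1 : k) else 0) + (if z = y then -1 else 0) := by
      intro z
      have hz : z ∉ t.1 := by rw [hte]; exact Finset.notMem_empty z
      rw [dif_neg hz]
      have hins : (insF t z hz).1 = {z} := by
        show insert z t.1 = {z}
        rw [hte]; rfl
      have hidx : vIdx (insert z t.1) z = 0 := by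
        have h1 : insert z t.1 = {z} := by rw [hte]; rfl
        rw [h1, vIdx_eq_count _ z (Finset.mem_singleton_self z)]
        rw [Finset.filter_singleton, if_neg (lt_irrefl z), Finset.card_empty]
      rw [hidx, pow_zero, one_mul, hc_def, mkCh_apply, hins]
      simp only [Finset.singleton_inj]
      by_cases h1 : z = x
      · rw [if_pos h1, if_pos h1, if_neg (h1 ▸ hxy), add_zero]
      · rw [if_neg h1, if_neg h1, zero_add]
    rw [Finset.sum_congr rfl (fun z _ => hterm z), Finset.sum_add_distrib]
    rw [Finset.sum_ite_eq' Finset.univ x (fun _ => (1 : k)),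
      Finset.sum_ite_eq' Finset.univ y (fun _ => (-1 : k))]
    simp
  have h0' : HVanish k Γ (((1 : ℕ) : ℤ) - 1) := by
    have he : ((1 : ℕ) : ℤ) - 1 = 0 := by norm_num
    rw [he]; exact h0
  obtain ⟨b, hbm, hbc⟩ := Submodule.mem_map.1 (hv_elim k h0' hcyc)
  have key : (∑ v : V, if PReach Γ x v then c ⟨{v}, Finset.card_singleton v⟩ else 0)
      = 1 := by
    rw [Finset.sum_eq_single x (fun v _ hvx => by
      by_cases hr : PReach Γ x v
      · rw [if_pos hr, hc_def, mkCh_apply]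
        simp only [Finset.singleton_inj]
        rw [if_neg hvx, if_neg]
        intro h
        rw [h] at hr
        exact hR hr
      · rw [if_neg hr])
      (fun h => absurd (Finset.mem_univ x) h)]
    rw [if_pos (show PReach Γ x x from Relation.ReflTransGen.refl), hc_def, mkCh_apply, if_pos rfl]
  have key2 : (∑ v : V, if PReach Γ x v then
      (bdry k 1 b) ⟨{v}, Finset.card_singleton v⟩ else 0) = 0 := by
    have hstep : ∀ v : V, (if PReach Γ x v then
        (bdry k 1 b) ⟨{v}, Finset.card_singleton v⟩ else 0)
        = ∑ z : V, (if h : z ∈ ({v} : Finset V) then 0 else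
            if PReach Γ x v then
              (-1 : k) ^ vIdx (insert z ({v} : Finset V)) z *
                b (insF ⟨{v}, Finset.card_singleton v⟩ z h) else 0) := by
      intro v
      by_cases hr : PReach Γ x v
      · rw [if_pos hr, bdry_apply]
        apply Finset.sum_congr rfl
        intro z _
        by_cases hz : z ∈ ({v} : Finset V)
        · rw [dif_pos hz, dif_pos hz]
        · rw [dif_neg hz, dif_neg hz, if_pos hr]
      · rw [if_neg hr, Finset.sum_eq_zero]
        intro z _
        by_cases hz : z ∈ ({v} : Finset V)
        · rw [dif_pos hz]
        · rw [dif_neg hz, if_neg hr]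
    rw [Finset.sum_congr rfl (fun v _ => hstep v)]
    rw [← Finset.sum_product']
    refine Finset.sum_involution (fun p _ => (p.2, p.1)) ?_ ?_ ?_ ?_
    · rintro ⟨v, z⟩ -
      simp only
      by_cases hvz : v = z
      · subst hvz
        simp
      · have hz1 : z ∉ ({v} : Finset V) := fun h => hvz (Finset.mem_singleton.1 h).symm
        have hz2 : v ∉ ({z} : Finset V) := fun h => hvz (Finset.mem_singleton.1 h)
        rw [dif_neg hz1, dif_neg hz2]
        have hface : (insF (⟨{v}, Finset.card_singleton v⟩ : {s : Finset V // s.card = 1}) z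
            hz1).1
            = (insF (⟨{z}, Finset.card_singleton z⟩ : {s : Finset V // s.card = 1}) v
            hz2).1 := by
          show insert z {v} = insert v {z}
          exact Finset.pair_comm z v
        by_cases hb0 : b (insF (⟨{v}, Finset.card_singleton v⟩ :
            {s : Finset V // s.card = 1}) z hz1) = 0
        · rw [hb0]
          rw [faceApp_congr k b hface] at hb0
          rw [hb0]
          simp
        · have hedge : ({z, v} : Finset V) ∈ Γ := (mem_suppIn_iff k Γ b).1 hbm _ hb0
          have hiff : PReach Γ x v ↔ PReach Γ x z := by
            constructor
            · intro h
              exact Relation.ReflTransGen.tail h (by rwa [Finset.pair_comm])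
            · intro h
              exact Relation.ReflTransGen.tail h hedge
          by_cases hr : PReach Γ x v
          · rw [if_pos hr, if_pos (hiff.1 hr)]
            rw [← faceApp_congr k b hface]
            have hsign : vIdx (insert z ({v} : Finset V)) z
                + vIdx (insert v ({z} : Finset V)) v = 1 := by
              have e1 : insert z ({v} : Finset V) = {v, z} := Finset.pair_comm z v
              have e2 : insert v ({z} : Finset V) = ({v, z} : Finset V) := rfl
              rw [e1, e2, add_comm]
              exact vIdx_pair_sum v z (fun h => hvz h)
            rw [← add_mul, negpow_sum_zero k hsign, zero_mul]
          · rw [if_neg hr, if_neg (fun h => hr (hiff.2 h))]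
            simp
    · rintro ⟨v, z⟩ - hf
      intro heq
      have hzv : z = v := congrArg Prod.fst heq
      apply hf
      subst hzv
      simp
    · rintro ⟨v, z⟩ -
      exact Finset.mem_univ _
    · rintro ⟨v, z⟩ -
      rfl
  rw [hbc] at key2
  rw [key] at key2
  exact one_ne_zero key2

end Connect

section Pure

open scoped Classical

variable (k : Type*) [Field k] {V : Type*} [Fintype V]

lemma facet_erase_isFacet {Γ : Finset (Finset V)} {F : Finset V} (hF : IsFacet Γ F)
    {x : V} (hx : x ∈ F) : IsFacet (linkC Γ {x}) (F.erase x) := by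
  constructor
  · rw [mem_linkC]
    refine ⟨Finset.disjoint_singleton_right.2 (Finset.notMem_erase x F), ?_⟩
    rw [Finset.union_comm, ← Finset.insert_eq, Finset.insert_erase hx]
    exact hF.1
  · intro t ht hsub
    have ht' := mem_linkC.1 ht
    have h1 : F ⊆ t ∪ {x} := by
      intro w hw
      by_cases hwx : w = x
      · subst hwx; exact Finset.mem_union_right _ (Finset.mem_singleton_self w)
      · exact Finset.mem_union_left _ (hsub (Finset.mem_erase.2 ⟨hwx, hw⟩))
    have h2 := hF.2 (t ∪ {x}) ht'.2 h1
    rw [h2, Finset.union_comm, ← Finset.insert_eq, Finset.erase_insert]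
    exact Finset.disjoint_singleton_right.1 ht'.1

lemma isCM_linkC {Γ : Finset (Finset V)} (hC : IsCM k Γ) {x : V} :
    IsCM k (linkC Γ {x}) := by
  intro σ hσ i hi
  have hσ' := mem_linkC.1 hσ
  have heq : linkC (linkC Γ {x}) σ = linkC Γ ({x} ∪ σ) := linkC_linkC hσ'.1
  rw [heq] at hi ⊢
  have hmem : {x} ∪ σ ∈ Γ := by rw [Finset.union_comm]; exact hσ'.2
  exact hC _ hmem i hi

lemma facet_of_card_sup {Γ : Finset (Finset V)} {s : Finset V} (hs : s ∈ Γ)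
    (hc : s.card = Γ.sup Finset.card) : IsFacet Γ s :=
  ⟨hs, fun t ht hst => Finset.eq_of_subset_of_card_le hst
    (by rw [hc]; exact Finset.le_sup ht)⟩

lemma pure_aux : ∀ N : ℕ, ∀ Γ : Finset (Finset V), DownClosed Γ → IsCM k Γ →
    Γ.sup Finset.card = N → PureCard Γ N := by
  intro N
  induction N using Nat.strong_induction_on with
  | _ N IH =>
  intro Γ hK hC hgen F hF
  have hle : F.card ≤ N := by rw [← hgen]; exact Finset.le_sup hF.1
  by_cases hF0 : F.card = 0
  · -- empty facet: the whole complex is {∅}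
    have hFe : F = ∅ := Finset.card_eq_zero.1 hF0
    have hall : ∀ t ∈ Γ, t = ∅ := by
      intro t ht
      rw [← hFe]
      exact (hF.2 t ht (by rw [hFe]; exact Finset.empty_subset t)).symm
    have hsup0 : Γ.sup Finset.card = 0 := by
      apply Nat.le_antisymm _ (Nat.zero_le _)
      apply Finset.sup_le
      intro t ht
      rw [hall t ht]
      simp
    rw [hgen] at hsup0
    omega
  rcases Nat.lt_or_ge N 2 with hN2 | hN2
  · omega
  · -- main case N ≥ 2
    have hΓne : Γ.Nonempty := ⟨F, hF.1⟩
    have hemp : ∅ ∈ Γ := hK ∅ F hF.1 (Finset.empty_subset F)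
    have hNx : ∀ x : V, ∀ F' : Finset V, IsFacet Γ F' → x ∈ F' →
        F'.card = (linkC Γ {x}).sup Finset.card + 1 := by
      intro x F' hF' hxF
      have hlF : IsFacet (linkC Γ {x}) (F'.erase x) := facet_erase_isFacet hF' hxF
      have hsub : (linkC Γ {x}).sup Finset.card < N := by
        have hb : ∀ γ ∈ linkC Γ {x}, γ.card ≤ N - 1 := by
          intro γ hγ
          have hγ' := mem_linkC.1 hγ
          have h1 : (γ ∪ {x}).card ≤ N := by rw [← hgen]; exact Finset.le_sup hγ'.2
          rw [Finset.card_union_of_disjoint hγ'.1, Finset.card_singleton] at h1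
          omega
        have := Finset.sup_le hb
        omega
      have hpureL := IH _ hsub (linkC Γ {x}) (downClosed_linkC hK _) (isCM_linkC k hC) rfl
      have hcard := hpureL _ hlF
      rw [Finset.card_erase_of_mem hxF] at hcard
      have hpos : 0 < F'.card := Finset.card_pos.2 ⟨x, hxF⟩
      omega
    have hedge : ∀ a b : V, ({a, b} : Finset V) ∈ Γ →
        (linkC Γ {a}).sup Finset.card = (linkC Γ {b}).sup Finset.card := by
      intro a b hab
      obtain ⟨G, hG, hsubG⟩ := exists_facet hab
      have ha : a ∈ G := hsubG (Finset.mem_insert_self _ _)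
      have hb : b ∈ G := hsubG (Finset.mem_insert_of_mem (Finset.mem_singleton_self _))
      have h1 := hNx a G hG ha
      have h2 := hNx b G hG hb
      omega
    have hvan : HVanish k Γ 0 := by
      have hdim : (0 : ℤ) < dimC (linkC Γ ∅) := by
        rw [linkC_empty]
        unfold dimC
        rw [hgen]
        have : (2 : ℤ) ≤ (N : ℤ) := by exact_mod_cast hN2
        omega
      have := hC ∅ hemp 0 hdim
      rwa [linkC_empty] at this
    obtain ⟨G, hGm, hGc⟩ := Finset.exists_mem_eq_sup Γ hΓne Finset.card
    have hGcard : G.card = N := by rw [← hgen, hGc]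
    have hGfacet : IsFacet Γ G := facet_of_card_sup hGm hGc.symm
    obtain ⟨x, hxF⟩ : F.Nonempty := Finset.card_pos.1 (by omega)
    obtain ⟨y, hyG⟩ : G.Nonempty := Finset.card_pos.1 (by omega)
    have hxv : {x} ∈ Γ := hK {x} F hF.1 (Finset.singleton_subset_iff.2 hxF)
    have hyv : {y} ∈ Γ := hK {y} G hGm (Finset.singleton_subset_iff.2 hyG)
    have hreach := connectivity k hvan hxv hyv
    have hpath : ∀ a b : V, PReach Γ a b →
        (linkC Γ {a}).sup Finset.card = (linkC Γ {b}).sup Finset.card := by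
      intro a b h
      induction h with
      | refl => rfl
      | tail hab hstep ih => exact ih.trans (hedge _ _ hstep)
    have hconst := hpath x y hreach
    have h1 := hNx x F hF hxF
    have h2 := hNx y G hGfacet hyG
    omega

theorem pure_of_isCM {Γ : Finset (Finset V)} (hK : DownClosed Γ) (hC : IsCM k Γ) :
    PureCard Γ (Γ.sup Finset.card) :=
  pure_aux k _ Γ hK hC rfl

end Pure

section P2sec

open scoped Classical

variable (k : Type*) [Field k] {V : Type*} [Fintype V]

lemma delV_anti {K : Finset (Finset V)} {U U' : Finset V} (h : U ⊆ U') :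
    delV K U' ⊆ delV K U := by
  intro s hs
  rw [mem_delV] at hs ⊢
  exact ⟨hs.1, Finset.disjoint_of_subset_right h hs.2⟩

/-- Extraction: if a sum of cones over `U` is supported away from `U`, each summand's
generator has vanishing boundary. -/
lemma cone_sum_extract {n : ℕ} (U : Finset V) (p : V → ChSp k V (n + 1))
    (w' : ChSp k V (n + 1))
    (hfree : ∀ u ∈ U, ∀ s : {s : Finset V // s.card = n},
      bdry k n (p u) s ≠ 0 → Disjoint s.1 U)
    (hw' : ∀ s : {s : Finset V // s.card = n + 1}, ¬ Disjoint s.1 U → w' s = 0)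
    (hEq : ∑ u ∈ U, coneC k u (bdry k n (p u)) = w') :
    ∀ u ∈ U, bdry k n (p u) = 0 := by
  intro u hu
  apply Finsupp.ext
  intro γ
  rw [Finsupp.coe_zero, Pi.zero_apply]
  by_cases hdU : Disjoint γ.1 U
  · have hins : u ∉ γ.1 := fun hcm => Finset.disjoint_left.1 hdU hcm hu
    have hval := congrArg (fun f : ChSp k V (n + 1) => f (insF γ u hins)) hEq
    rw [sum_coneC_apply k U (fun u => bdry k n (p u)) u hu γ hdU hins] at hval
    rw [hw' _ (fun hdisj => Finset.disjoint_left.1 hdisj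
      (Finset.mem_insert_self u γ.1) hu)] at hval
    rcases mul_eq_zero.1 hval with h | h
    · exact absurd h (pow_ne_zero _ (neg_ne_zero.2 one_ne_zero))
    · exact h
  · by_contra h
    exact hdU (hfree u hu γ h)

namespace DelSetting

variable {k : Type*} [Field k] {V : Type*} [Fintype V]
variable {L : Finset (Finset V)} {U : Finset V} {d : ℕ}

lemma dim_delVw (S : DelSetting k L U d) (w : V) (hwU : w ∉ U) (hwL : {w} ∈ L)
    (hv2dim : ∀ u ∈ U, ({u, w} : Finset V) ∈ L →
      (delV (linkC L {u}) {w}).sup Finset.card = d - 1) :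
    (delV L (U ∪ {w})).sup Finset.card = d - 1 := by
  apply le_antisymm
  · calc (delV L (U ∪ {w})).sup Finset.card
        ≤ (delV L U).sup Finset.card :=
          Finset.sup_mono (delV_anti Finset.subset_union_left)
      _ = d - 1 := sup_card_delV_eq S.down S.pure S.trans ⟨∅, S.empty_mem⟩
  · obtain ⟨F, hF, hwF⟩ := exists_facet hwL
    obtain ⟨u₁, hu₁⟩ := Finset.card_eq_one.1 (S.trans F hF)
    have hu₁F : u₁ ∈ F := by
      have : u₁ ∈ F ∩ U := hu₁ ▸ Finset.mem_singleton_self u₁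
      exact (Finset.mem_inter.1 this).1
    have hu₁U : u₁ ∈ U := by
      have : u₁ ∈ F ∩ U := hu₁ ▸ Finset.mem_singleton_self u₁
      exact (Finset.mem_inter.1 this).2
    have hwFm : w ∈ F := hwF (Finset.mem_singleton_self w)
    have hpair : ({u₁, w} : Finset V) ∈ L := by
      apply S.down _ F hF.1
      intro z hz
      rcases Finset.mem_insert.1 hz with rfl | hz
      · exact hu₁F
      · rw [Finset.mem_singleton.1 hz]; exact hwFm
    have hsup := hv2dim u₁ hu₁U hpair
    have hne : ∅ ∈ delV (linkC L {u₁}) {w} := by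
      rw [mem_delV, mem_linkC]
      refine ⟨⟨Finset.disjoint_empty_left _, ?_⟩, Finset.disjoint_empty_left _⟩
      rw [Finset.empty_union]
      exact S.down _ F hF.1 (Finset.singleton_subset_iff.2 hu₁F)
    obtain ⟨γ, hγm, hγc⟩ := Finset.exists_mem_eq_sup (delV (linkC L {u₁}) {w})
      ⟨∅, hne⟩ Finset.card
    have hγcard : γ.card = d - 1 := by rw [← hγc, hsup]
    have hγM : γ ∈ delV L (U ∪ {w}) := by
      rw [mem_delV] at hγm ⊢
      obtain ⟨hγl, hγw⟩ := hγm
      have hγl' := mem_linkC.1 hγl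
      refine ⟨S.down γ _ hγl'.2 Finset.subset_union_left, ?_⟩
      rw [Finset.disjoint_union_right]
      exact ⟨link_face_disjU S.trans hu₁U hγl, hγw⟩
    calc d - 1 = γ.card := hγcard.symm
      _ ≤ _ := Finset.le_sup hγM

lemma P2core (S : DelSetting k L U d)
    (w : V) (hwU : w ∉ U) (hwL : {w} ∈ L)
    (hvw : ∀ i : ℤ, i < (d : ℤ) - 2 → HVanish k (linkC L {w}) i)
    (hvuw : ∀ u ∈ U, ∀ i : ℤ, i < (d : ℤ) - 3 →
      HVanish k (linkC (linkC L {w}) {u}) i)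
    (hv2 : ∀ u ∈ U, ({u, w} : Finset V) ∈ L →
      (∀ i : ℤ, i < (d : ℤ) - 2 → HVanish k (delV (linkC L {u}) {w}) i) ∧
      (delV (linkC L {u}) {w}).sup Finset.card = d - 1) :
    ∀ n : ℕ, (n : ℤ) ≤ (d : ℤ) - 2 →
      zcyc k (delV L (U ∪ {w})) n ≤ zbnd k (delV L (U ∪ {w})) n := by
  have hdim := S.dim_delVw w hwU hwL (fun u hu hp => (hv2 u hu hp).2)
  intro n hn
  match n with
  | 0 =>
    intro c hc
    have hc' : c ∈ suppIn k (delV L (U ∪ {w})) 0 := hc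
    have hd2 : 2 ≤ d := by omega
    -- get a vertex of the deletion
    obtain ⟨t, htm, htc⟩ := Finset.exists_mem_eq_sup (delV L (U ∪ {w}))
      ⟨∅, by
        rw [mem_delV]
        exact ⟨S.empty_mem, Finset.disjoint_empty_left _⟩⟩ Finset.card
    have htcard : t.card = d - 1 := by rw [← htc, hdim]
    have htne : t.Nonempty := by rw [← Finset.card_pos, htcard]; omega
    obtain ⟨v, hv⟩ := htne
    have hvm : {v} ∈ delV L (U ∪ {w}) :=
      downClosed_delV S.down _ {v} t htm (Finset.singleton_subset_iff.2 hv)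
    refine Submodule.mem_map.2 ⟨coneC k v c, ?_, bdry_coneC_zero k v c⟩
    apply coneC_mem_suppIn
    rw [mem_suppIn_iff] at hc' ⊢
    intro s hs
    have hse : s.1 = ∅ := Finset.card_eq_zero.1 s.2
    rw [mem_linkC, hse]
    refine ⟨Finset.disjoint_empty_left _, ?_⟩
    rwa [Finset.empty_union]
  | m + 1 =>
    intro c hc
    set M := delV L (U ∪ {w}) with hM_def
    have hc' : c ∈ suppIn k M (m + 1) ⊓ LinearMap.ker (bdry k m) := hc
    obtain ⟨hc1, hc2⟩ := Submodule.mem_inf.1 hc'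
    -- Step 1: bound c in `delV L U` using P0
    have hcD : c ∈ zcyc k (delV L U) (m + 1) :=
      Submodule.mem_inf.2 ⟨suppIn_mono k (delV_anti Finset.subset_union_left) _ hc1, hc2⟩
    obtain ⟨b, hbmem, hbc⟩ := Submodule.mem_map.1 (S.P0core (m + 1) (by push_cast; omega) hcD)
    -- Step 2: peel off the w-part of b
    set e : ChSp k V (m + 1) := unconeC k w b with he_def
    set b₁ : ChSp k V (m + 2) := resC k (fun f => Disjoint f {w}) b with hb₁_def
    have hble : ∀ s : {s : Finset V // s.card = m + 2}, b s ≠ 0 → (s.1 ∩ {w}).card ≤ 1 :=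
      fun s _ => le_trans (Finset.card_le_card (Finset.inter_subset_right)) (by simp)
    have hdecomp := chain_decomp k {w} b hble
    rw [Finset.sum_singleton] at hdecomp
    have hefree : ∀ s, e s ≠ 0 → w ∉ s.1 := by
      intro s hs hx
      exact hs (unconeC_apply_neg k w b s hx)
    have hsplit : c = bdry k (m + 1) b₁ + (e - coneC k w (bdry k m e)) := by
      conv_lhs => rw [← hbc, hdecomp]
      rw [map_add]
      congr 1
      exact bdry_coneC k w e hefree
    have hb₁m : b₁ ∈ suppIn k M (m + 2) := by
      have := resC_mem_suppIn_delV k {w} hbmem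
      rwa [delV_delV] at this
    have hdb₁ : bdry k (m + 1) b₁ ∈ suppIn k M (m + 1) :=
      bdry_mem_suppIn k (downClosed_delV S.down _) hb₁m
    -- e is supported on delV (linkC L {w}) U
    have hem : e ∈ suppIn k (delV (linkC L {w}) U) (m + 1) := by
      have h1 : e ∈ suppIn k (linkC (delV L U) {w}) (m + 1) := unconeC_mem_suppIn k hbmem
      rwa [← delV_linkC (Finset.disjoint_singleton_left.2 hwU)] at h1
    -- extract that e is a cycle
    have hez : bdry k m e = 0 := by
      have hEq : ∑ u ∈ ({w} : Finset V), coneC k u (bdry k m e)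
          = (bdry k (m + 1) b₁ + e) - c := by
        rw [Finset.sum_singleton, hsplit]
        abel
      refine cone_sum_extract k {w} (fun _ => e) ((bdry k (m + 1) b₁ + e) - c)
        ?_ ?_ hEq w (Finset.mem_singleton_self w)
      · intro u hu s hs
        have hsupp : bdry k m e ∈ suppIn k (delV (linkC L {w}) U) m :=
          bdry_mem_suppIn k (downClosed_delV (downClosed_linkC S.down _) U) hem
        have hface := (mem_suppIn_iff k _ _).1 hsupp s (by simpa using hs)
        rw [mem_delV, mem_linkC] at hface
        exact hface.1.1
      · intro s hnd
        rw [Finset.not_disjoint_iff] at hnd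
        obtain ⟨z, hz1, hz2⟩ := hnd
        rw [Finset.mem_singleton.1 hz2] at hz1
        have hsM : s.1 ∉ M := by
          rw [hM_def, mem_delV]
          rintro ⟨-, hdisj⟩
          exact Finset.disjoint_left.1 hdisj hz1
            (Finset.mem_union_right _ (Finset.mem_singleton_self w))
        have he0 : e s = 0 := by
          apply suppIn_apply_eq_zero k hem
          rw [mem_delV, mem_linkC]
          rintro ⟨⟨hd1, -⟩, -⟩
          exact Finset.disjoint_left.1 hd1 hz1 (Finset.mem_singleton_self w)
        rw [Finsupp.sub_apply, Finsupp.add_apply, he0,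
          suppIn_apply_eq_zero k hdb₁ s hsM, suppIn_apply_eq_zero k hc1 s hsM]
        simp
    have hc_eq : c = bdry k (m + 1) b₁ + e := by
      rw [hsplit, hez, coneC_zero, sub_zero]
    -- Γw faces sit inside M
    have hΓwM : delV (linkC L {w}) U ⊆ M := by
      intro γ hγ
      rw [mem_delV, mem_linkC] at hγ
      rw [hM_def, mem_delV]
      obtain ⟨⟨hd1, hm1⟩, hd2⟩ := hγ
      refine ⟨S.down γ _ hm1 Finset.subset_union_left, ?_⟩
      rw [Finset.disjoint_union_right]
      exact ⟨hd2, hd1⟩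
    by_cases htop : ((m : ℤ) + 1) ≤ (d : ℤ) - 3
    · -- non-top case: use P0 for the link of w
      have hd3 : 3 ≤ d := by omega
      have S' : DelSetting k (linkC L {w}) U (d - 1) :=
        { down := downClosed_linkC S.down _
          empty_mem := by
            rw [mem_linkC]
            refine ⟨Finset.disjoint_empty_left _, ?_⟩
            rwa [Finset.empty_union]
          pure := by
            have := pure_link S.down S.pure (σ := {w})
            rwa [Finset.card_singleton] at this
          trans := trans_link S.down S.trans (Finset.disjoint_singleton_left.2 hwU)
          hv := by
            intro i hi
            apply hvw
            have : ((d - 1 : ℕ) : ℤ) = (d : ℤ) - 1 := by push_cast [hd3]; omega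
            omega
          hvlink := by
            intro u hu i hi
            apply hvuw u hu
            have : ((d - 1 : ℕ) : ℤ) = (d : ℤ) - 1 := by push_cast [hd3]; omega
            omega }
      have hcyce : e ∈ zcyc k (delV (linkC L {w}) U) (m + 1) :=
        Submodule.mem_inf.2 ⟨hem, LinearMap.mem_ker.2 hez⟩
      have hrange : ((m + 1 : ℕ) : ℤ) ≤ ((d - 1 : ℕ) : ℤ) - 2 := by
        have : ((d - 1 : ℕ) : ℤ) = (d : ℤ) - 1 := by push_cast [hd3]; omega
        push_cast
        omega
      obtain ⟨f, hfm, hfe⟩ := Submodule.mem_map.1 (S'.P0core (m + 1) hrange hcyce)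
      refine Submodule.mem_map.2 ⟨b₁ + f, ?_, ?_⟩
      · exact Submodule.add_mem _ hb₁m (suppIn_mono k hΓwM _ hfm)
      · rw [map_add, hfe, hc_eq]
    · -- top case
      have hmd : (m : ℤ) + 3 = (d : ℤ) := by omega
      -- e is a cycle in the link of w; bound it there
      have hcycLw : e ∈ zcyc k (linkC L {w}) (m + 1) := by
        refine Submodule.mem_inf.2 ⟨?_, LinearMap.mem_ker.2 hez⟩
        exact suppIn_mono k (delV_subset _ _) _ hem
      have hq : HVanish k (linkC L {w}) (((m + 1 : ℕ) : ℤ) - 1) := by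
        apply hvw
        push_cast
        omega
      obtain ⟨q, hqm, hqe⟩ := Submodule.mem_map.1 (hv_elim k hq hcycLw)
      -- faces of q contain exactly one vertex of U
      have hqface : ∀ s : {s : Finset V // s.card = m + 2}, q s ≠ 0 →
          (s.1 ∩ U).card = 1 := by
        intro s hs
        have hmem := (mem_suppIn_iff k _ _).1 hqm s hs
        have hmem' := mem_linkC.1 hmem
        have hcard : (s.1 ∪ {w}).card = d := by
          rw [Finset.card_union_of_disjoint hmem'.1, Finset.card_singleton, s.2]
          omega
        have hfacet : IsFacet L (s.1 ∪ {w}) := facet_of_card_eq S.pure hmem'.2 hcard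
        have h1 := S.trans _ hfacet
        rw [Finset.union_inter_distrib_right] at h1
        have h2 : ({w} : Finset V) ∩ U = ∅ := by
          rw [Finset.singleton_inter_of_notMem hwU]
        rw [h2, Finset.union_empty] at h1
        exact h1
      -- decompose q along U with no U-free part
      have hqle : ∀ s : {s : Finset V // s.card = m + 2}, q s ≠ 0 →
          (s.1 ∩ U).card ≤ 1 := fun s hs => le_of_eq (hqface s hs)
      have hqdecomp := chain_decomp k U q hqle
      have hqres : resC k (fun f => Disjoint f U) q = 0 := by
        apply Finsupp.ext
        intro s
        rw [resC_apply, Finsupp.coe_zero, Pi.zero_apply]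
        by_cases hd0 : Disjoint s.1 U
        · rw [if_pos hd0]
          by_contra hqs
          have := hqface s hqs
          rw [Finset.disjoint_iff_inter_eq_empty.1 hd0] at this
          simp at this
        · rw [if_neg hd0]
      rw [hqres, zero_add] at hqdecomp
      set p : V → ChSp k V (m + 1) := fun u => unconeC k u q with hp_def
      -- the boundary of q evaluates to e; extract cycles
      have hsplit2 : e = ∑ u ∈ U, (p u - coneC k u (bdry k m (p u))) := by
        conv_lhs => rw [← hqe, hqdecomp]
        rw [map_sum]
        apply Finset.sum_congr rfl
        intro u _
        apply bdry_coneC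
        intro s hs hx
        exact hs (unconeC_apply_neg k u q s hx)
      have hpU : ∀ u ∈ U, p u ∈ suppIn k (delV (linkC L {u}) {w}) (m + 1) := by
        intro u hu
        have h1 : p u ∈ suppIn k (linkC (linkC L {w}) {u}) (m + 1) :=
          unconeC_mem_suppIn k hqm
        rw [mem_suppIn_iff] at h1 ⊢
        intro γ hγ
        have h2 := h1 γ hγ
        rw [mem_linkC] at h2
        obtain ⟨hdu, hmem⟩ := h2
        rw [mem_linkC] at hmem
        obtain ⟨hdw, hmem2⟩ := hmem
        rw [mem_delV, mem_linkC]
        have hγw : w ∉ γ.1 := by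
          intro hwγ
          exact Finset.disjoint_left.1 hdw (Finset.mem_union_left _ hwγ)
            (Finset.mem_singleton_self w)
        refine ⟨⟨hdu, ?_⟩, Finset.disjoint_singleton_right.2 hγw⟩
        -- γ ∪ {u} ∈ L from γ ∪ {u} ∪ {w} ∈ L
        apply S.down _ _ hmem2
        exact Finset.subset_union_left
      -- p u is U-free
      have hpfreeU : ∀ u ∈ U, ∀ γ : {s : Finset V // s.card = m + 1},
          p u γ ≠ 0 → Disjoint γ.1 U := by
        intro u hu γ hγ
        have h1 : p u ∈ suppIn k (linkC (linkC L {w}) {u}) (m + 1) :=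
          unconeC_mem_suppIn k hqm
        have h2 := (mem_suppIn_iff k _ _).1 h1 γ hγ
        exact link_face_disjU (trans_link S.down S.trans
          (Finset.disjoint_singleton_left.2 hwU)) hu h2
      -- extract that each p u is a cycle
      have hpz : ∀ u ∈ U, bdry k m (p u) = 0 := by
        apply cone_sum_extract k U p ((∑ u ∈ U, p u) - e)
        · intro u hu s hs
          have h1 : bdry k m (p u) ∈ suppIn k (delV (linkC L {u}) {w}) m :=
            bdry_mem_suppIn k (downClosed_delV (downClosed_linkC S.down _) _) (hpU u hu)
          -- support faces of ∂(p u) lie in linkC L {u}, hence are U-free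
          have h2 := (mem_suppIn_iff k _ _).1 h1 s hs
          rw [mem_delV] at h2
          exact link_face_disjU S.trans hu h2.1
        · intro s hnd
          rw [Finsupp.sub_apply, Finsupp.finset_sum_apply]
          have he0 : e s = 0 := by
            apply suppIn_apply_eq_zero k hem
            rw [mem_delV]
            rintro ⟨-, hd0⟩
            exact hnd hd0
          have hp0 : ∀ u ∈ U, p u s = 0 := by
            intro u hu
            by_contra hps
            exact hnd (hpfreeU u hu s hps)
          rw [he0, Finset.sum_eq_zero hp0]
          simp
        · rw [Finset.sum_sub_distrib] at hsplit2
          rw [hsplit2]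
          abel
      have hc_e : e = ∑ u ∈ U, p u := by
        rw [hsplit2]
        apply Finset.sum_congr rfl
        intro u hu
        rw [hpz u hu, coneC_zero, sub_zero]
      -- bound each p u using the 2CM hypothesis
      have hex : ∀ u, u ∈ U → ∃ fu : ChSp k V (m + 2),
          fu ∈ suppIn k M (m + 2) ∧ bdry k (m + 1) fu = p u := by
        intro u hu
        by_cases hp0 : p u = 0
        · exact ⟨0, Submodule.zero_mem _, by rw [map_zero, hp0]⟩
        · -- find a support face to get the trigger {u, w} ∈ L
          have hex0 : ∃ γ : {s : Finset V // s.card = m + 1}, p u γ ≠ 0 := by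
            by_contra hall
            push_neg at hall
            exact hp0 (Finsupp.ext (fun γ => by rw [hall γ]; rfl))
          obtain ⟨γ₀, hγ₀⟩ := hex0
          have h1 : p u ∈ suppIn k (linkC (linkC L {w}) {u}) (m + 1) :=
            unconeC_mem_suppIn k hqm
          have h2 := (mem_suppIn_iff k _ _).1 h1 γ₀ hγ₀
          rw [mem_linkC] at h2
          have h3 := mem_linkC.1 h2.2
          have htrig : ({u, w} : Finset V) ∈ L := by
            apply S.down _ _ h3.2
            intro z hz
            rcases Finset.mem_insert.1 hz with rfl | hz
            · exact Finset.mem_union_left _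
                (Finset.mem_union_right _ (Finset.mem_singleton_self z))
            · rw [Finset.mem_singleton.1 hz]
              exact Finset.mem_union_right _ (Finset.mem_singleton_self w)
          have hcyc : p u ∈ zcyc k (delV (linkC L {u}) {w}) (m + 1) :=
            Submodule.mem_inf.2 ⟨hpU u hu, LinearMap.mem_ker.2 (hpz u hu)⟩
          have hvp : HVanish k (delV (linkC L {u}) {w}) (((m + 1 : ℕ) : ℤ) - 1) := by
            apply (hv2 u hu htrig).1
            push_cast
            omega
          obtain ⟨fu, hfum, hfue⟩ := Submodule.mem_map.1 (hv_elim k hvp hcyc)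
          refine ⟨fu, ?_, hfue⟩
          rw [mem_suppIn_iff] at hfum ⊢
          intro s hs
          have h4 := hfum s hs
          rw [mem_delV, mem_linkC] at h4
          obtain ⟨⟨hd1, hm1⟩, hd2⟩ := h4
          rw [hM_def, mem_delV]
          refine ⟨S.down _ _ hm1 Finset.subset_union_left, ?_⟩
          rw [Finset.disjoint_union_right]
          refine ⟨?_, hd2⟩
          exact link_face_disjU S.trans hu (mem_linkC.2 ⟨hd1, hm1⟩)
      choose! fu hfu1 hfu2 using hex
      refine Submodule.mem_map.2 ⟨b₁ + ∑ u ∈ U, fu u, ?_, ?_⟩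
      · apply Submodule.add_mem _ hb₁m
        apply Submodule.sum_mem
        intro u hu
        exact hfu1 u hu
      · rw [map_add, map_sum, hc_eq, hc_e]
        congr 1
        apply Finset.sum_congr rfl
        intro u hu
        exact hfu2 u hu

end DelSetting

end P2sec

section Assemble

open scoped Classical

variable {V : Type*} [Fintype V]

lemma Ufree_card_lt {K : Finset (Finset V)} {d : ℕ} {U : Finset V}
    (hpure : PureCard K d) (hU : ∀ s, IsFacet K s → (s ∩ U).card = 1)
    {s : Finset V} (hs : s ∈ K) (hd : Disjoint s U) : s.card + 1 ≤ d := by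
  obtain ⟨F, hF, hsF⟩ := exists_facet hs
  obtain ⟨u, hu⟩ := Finset.card_eq_one.1 (hU F hF)
  have huF : u ∈ F := (Finset.mem_inter.1 (hu ▸ Finset.mem_singleton_self u)).1
  have huU : u ∈ U := (Finset.mem_inter.1 (hu ▸ Finset.mem_singleton_self u)).2
  have hus : u ∉ s := fun hc => Finset.disjoint_left.1 hd hc huU
  have h1 : s ⊆ F.erase u := Finset.subset_erase.2 ⟨hsF, hus⟩
  have h2 := Finset.card_le_card h1
  rw [Finset.card_erase_of_mem huF, hpure F hF] at h2
  have h3 : 1 ≤ d := by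
    rw [← hpure F hF]
    exact Finset.card_pos.2 ⟨u, huF⟩
  omega

lemma delV_extra_vertex {Γ : Finset (Finset V)} (hΓ : DownClosed Γ) {U : Finset V} {v : V}
    (hv : {v} ∉ Γ) : delV Γ (U ∪ {v}) = delV Γ U := by
  ext γ
  rw [mem_delV, mem_delV, Finset.disjoint_union_right]
  constructor
  · rintro ⟨h1, h2, -⟩
    exact ⟨h1, h2⟩
  · rintro ⟨h1, h2⟩
    refine ⟨h1, h2, ?_⟩
    rw [Finset.disjoint_singleton_right]
    intro hvγ
    exact hv (hΓ {v} γ h1 (Finset.singleton_subset_iff.2 hvγ))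

variable (k : Type*) [Field k]

lemma dimC_of_sup {Γ : Finset (Finset V)} {D0 : ℕ} (h : Γ.sup Finset.card = D0) :
    dimC Γ = (D0 : ℤ) - 1 := by
  unfold dimC
  rw [h]

lemma hv_link_any {K : Finset (Finset V)} {d : ℕ} (hK : DownClosed K)
    (hpure : PureCard K d) (hCM : IsCM k K) :
    ∀ σ' : Finset V, ∀ i : ℤ, i < (d : ℤ) - σ'.card - 1 → HVanish k (linkC K σ') i := by
  intro σ' i hi
  by_cases hmem : σ' ∈ K
  · apply hCM σ' hmem i
    have hc : σ'.card ≤ d := face_card_le hpure hmem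
    have hsup : (linkC K σ').sup Finset.card = d - σ'.card :=
      sup_card_eq (pure_link hK hpure) ⟨∅, mem_linkC.2 ⟨Finset.disjoint_empty_left _,
        by rwa [Finset.empty_union]⟩⟩
    rw [dimC_of_sup hsup, Nat.cast_sub hc]
    exact hi
  · rw [linkC_of_not_mem hK hmem]
    exact HVanish_empty k i

/-- Build a `DelSetting` for the link of a `U`-free face. -/
lemma mkSetting {K : Finset (Finset V)} {d : ℕ} {U : Finset V} (hK : DownClosed K)
    (hpure : PureCard K d) (hU : ∀ s, IsFacet K s → (s ∩ U).card = 1) (hCM : IsCM k K)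
    {σ : Finset V} (hσK : σ ∈ K) (hσU : Disjoint σ U) :
    DelSetting k (linkC K σ) U (d - σ.card) := by
  have hc : σ.card ≤ d := face_card_le hpure hσK
  have hcast : ((d - σ.card : ℕ) : ℤ) = (d : ℤ) - σ.card := Nat.cast_sub hc
  exact
  { down := downClosed_linkC hK σ
    empty_mem := mem_linkC.2 ⟨Finset.disjoint_empty_left _, by rwa [Finset.empty_union]⟩
    pure := pure_link hK hpure
    trans := trans_link hK hU hσU
    hv := by
      intro i hi
      apply hv_link_any k hK hpure hCM σ i
      omega
    hvlink := by
      intro u hu i hi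
      have huσ : u ∉ σ := fun hc' => Finset.disjoint_left.1 hσU hc' hu
      have heq : linkC (linkC K σ) {u} = linkC K (σ ∪ {u}) :=
        linkC_linkC (Finset.disjoint_singleton_left.2 huσ)
      rw [heq]
      apply hv_link_any k hK hpure hCM (σ ∪ {u}) i
      have hcard : (σ ∪ {u}).card = σ.card + 1 := by
        rw [Finset.union_comm, ← Finset.insert_eq,
          Finset.card_insert_of_notMem huσ]
      rw [hcard]
      push_cast
      omega }

namespace DelSetting

lemma P2 {k : Type*} [Field k] {L : Finset (Finset V)} {U : Finset V} {d : ℕ}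
    (S : DelSetting k L U d)
    (w : V) (hwU : w ∉ U) (hwL : {w} ∈ L)
    (hvw : ∀ i : ℤ, i < (d : ℤ) - 2 → HVanish k (linkC L {w}) i)
    (hvuw : ∀ u ∈ U, ∀ i : ℤ, i < (d : ℤ) - 3 →
      HVanish k (linkC (linkC L {w}) {u}) i)
    (hv2 : ∀ u ∈ U, ({u, w} : Finset V) ∈ L →
      (∀ i : ℤ, i < (d : ℤ) - 2 → HVanish k (delV (linkC L {u}) {w}) i) ∧
      (delV (linkC L {u}) {w}).sup Finset.card = d - 1) :
    ∀ i : ℤ, i < (d : ℤ) - 2 → HVanish k (delV L (U ∪ {w})) i := by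
  intro i hi
  apply hv_intro
  intro m hm
  exact S.P2core w hwU hwL hvw hvuw hv2 m (by omega)

end DelSetting

/-- The 2CM data for the complexes `delV (linkC (linkC K σ) {u}) {v}`. -/
lemma hv2_piece {K : Finset (Finset V)} {d : ℕ} {U : Finset V} (hK : DownClosed K)
    (hpure : PureCard K d) (hU : ∀ s, IsFacet K s → (s ∩ U).card = 1)
    (hlink : ∀ u ∈ U, Is2CM k (linkC K {u}))
    {σ : Finset V} (hσU : Disjoint σ U) {v : V} (hvU : v ∉ U) (hvσ : v ∉ σ)
    {u : V} (hu : u ∈ U) (htrig : ({u, v} : Finset V) ∈ linkC K σ) :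
    (∀ i : ℤ, i < ((d : ℤ) - σ.card) - 2 →
      HVanish k (delV (linkC (linkC K σ) {u}) {v}) i) ∧
    (delV (linkC (linkC K σ) {u}) {v}).sup Finset.card = d - σ.card - 1 := by
  have huv : u ≠ v := fun h => hvU (h ▸ hu)
  have huσ : u ∉ σ := fun hc => Finset.disjoint_left.1 hσU hc hu
  have htrig' := mem_linkC.1 htrig
  have huvσK : ({u, v} : Finset V) ∪ σ ∈ K := htrig'.2
  have huvK : ({u, v} : Finset V) ∈ K := hK _ _ huvσK Finset.subset_union_left
  have huK : ({u} : Finset V) ∈ K := hK _ _ huvK (by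
    intro z hz
    rw [Finset.mem_singleton.1 hz]
    exact Finset.mem_insert_self u {v})
  -- identities
  have E1 : linkC (linkC K σ) {u} = linkC K (σ ∪ {u}) :=
    linkC_linkC (Finset.disjoint_singleton_left.2 huσ)
  have E2 : linkC (linkC K {u}) σ = linkC K (σ ∪ {u}) := by
    rw [linkC_linkC (Finset.disjoint_singleton_right.2 huσ), Finset.union_comm]
  have E3 : delV (linkC (linkC K {u}) σ) {v} = linkC (delV (linkC K {u}) {v}) σ :=
    delV_linkC (Finset.disjoint_singleton_right.2 hvσ)
  have Emain : delV (linkC (linkC K σ) {u}) {v}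
      = linkC (delV (linkC K {u}) {v}) σ := by
    rw [E1, ← E2, E3]
  -- the 2CM hypothesis
  have hvm : ({v} : Finset V) ∈ linkC K {u} := by
    rw [mem_linkC]
    refine ⟨Finset.disjoint_singleton_right.2 (fun h => huv (Finset.mem_singleton.1 h)), ?_⟩
    have : ({v} : Finset V) ∪ {u} = {u, v} := by
      rw [Finset.union_comm, ← Finset.insert_eq]
    rwa [this]
  obtain ⟨hCMΛ, hdimΛ⟩ := (hlink u hu).2 v hvm
  set Λ := delV (linkC K {u}) {v} with hΛ_def
  have hdownΛ : DownClosed Λ := downClosed_delV (downClosed_linkC hK {u}) {v}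
  -- dimension bookkeeping
  have hd1 : 1 ≤ d := by
    have := face_card_le hpure huK
    have : ({u} : Finset V).card = 1 := Finset.card_singleton u
    omega
  have hsupu : (linkC K {u}).sup Finset.card = d - 1 := by
    have := sup_card_eq (pure_link hK hpure (σ := {u})) ⟨∅, mem_linkC.2
      ⟨Finset.disjoint_empty_left _, by rwa [Finset.empty_union]⟩⟩
    rwa [Finset.card_singleton] at this
  have hsupΛ : Λ.sup Finset.card = d - 1 := by
    have h1 : dimC Λ = dimC (linkC K {u}) := hdimΛ
    rw [dimC_of_sup hsupu] at h1
    unfold dimC at h1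
    omega
  have hpureΛ : PureCard Λ (d - 1) := by
    have := pure_of_isCM k hdownΛ hCMΛ
    rwa [hsupΛ] at this
  -- σ belongs to Λ
  have hσΛ : σ ∈ Λ := by
    rw [hΛ_def, mem_delV, mem_linkC]
    refine ⟨⟨Finset.disjoint_singleton_right.2 huσ, ?_⟩,
      Finset.disjoint_singleton_right.2 hvσ⟩
    apply hK _ _ huvσK
    intro z hz
    rcases Finset.mem_union.1 hz with hz | hz
    · exact Finset.mem_union_right _ hz
    · rw [Finset.mem_singleton.1 hz]
      exact Finset.mem_union_left _ (Finset.mem_insert_self u {v})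
  have hσcard : σ.card + 1 ≤ d := by
    -- σ ∪ {u} ∈ K
    have hσuK : σ ∪ {u} ∈ K := by
      apply hK _ _ huvσK
      intro z hz
      rcases Finset.mem_union.1 hz with hz | hz
      · exact Finset.mem_union_right _ hz
      · rw [Finset.mem_singleton.1 hz]
        exact Finset.mem_union_left _ (Finset.mem_insert_self u {v})
    have h1 := face_card_le hpure hσuK
    have h2 : (σ ∪ {u}).card = σ.card + 1 := by
      rw [Finset.union_comm, ← Finset.insert_eq, Finset.card_insert_of_notMem huσ]
    omega
  have hsupT : (linkC Λ σ).sup Finset.card = d - 1 - σ.card :=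
    sup_card_eq (pure_link hdownΛ hpureΛ) ⟨∅, mem_linkC.2
      ⟨Finset.disjoint_empty_left _, by rwa [Finset.empty_union]⟩⟩
  constructor
  · intro i hi
    rw [Emain]
    apply hCMΛ σ hσΛ i
    rw [dimC_of_sup hsupT]
    have : ((d - 1 - σ.card : ℕ) : ℤ) = (d : ℤ) - 1 - σ.card := by
      rw [Nat.cast_sub (by omega : σ.card ≤ d - 1), Nat.cast_sub (by omega : 1 ≤ d)]
      push_cast
      ring
    omega
  · rw [Emain, hsupT]
    omega

end Assemble


open scoped Classical in
/-- If `Δ` is a pure `(d-1)`-dimensional Cohen-Macaulay complex over `k`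
with `d - 1 ≥ 1`, `U` a set of vertices meeting every facet in exactly one vertex, and all
links of vertices of `U` are doubly Cohen-Macaulay over `k`, then `Δ ∖ U` is doubly
Cohen-Macaulay over `k`. -/
theorem stmt6 (k : Type*) [Field k] (V : Type*) [Fintype V]
    (K : Finset (Finset V)) (hK : DownClosed K)
    (d : ℕ) (hd : 2 ≤ d) (hpure : PureCard K d) (hdim : dimC K = (d : ℤ) - 1)
    (U : Finset V) (hU : ∀ s : Finset V, IsFacet K s → (s ∩ U).card = 1)
    (hCM : IsCM k K) (hlink : ∀ u ∈ U, Is2CM k (linkC K {u})) :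
    Is2CM k (delV K U) := by
  classical
  have hsupK : K.sup Finset.card = d := by
    unfold dimC at hdim
    omega
  have hKempty : ∅ ∈ K := by
    have hne : K.Nonempty := by
      by_contra h
      rw [Finset.not_nonempty_iff_eq_empty] at h
      rw [h, Finset.sup_empty] at hsupK
      rw [Nat.bot_eq_zero] at hsupK
      omega
    obtain ⟨s, hs⟩ := hne
    exact hK ∅ s hs (Finset.empty_subset s)
  -- the ambient setting
  have SK : DelSetting k K U d :=
    { down := hK
      empty_mem := hKempty
      pure := hpure
      trans := hU
      hv := by
        intro i hi
        have := hv_link_any k hK hpure hCM ∅ i (by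
          rw [Finset.card_empty]
          push_cast
          omega)
        rwa [linkC_empty] at this
      hvlink := by
        intro u hu i hi
        apply hv_link_any k hK hpure hCM {u} i
        rw [Finset.card_singleton]
        push_cast
        omega }
  have part1 : IsCM k (delV K U) := by
    intro σ hσ i hi
    rw [mem_delV] at hσ
    obtain ⟨hσK, hσU⟩ := hσ
    have hE : linkC (delV K U) σ = delV (linkC K σ) U := (delV_linkC hσU).symm
    rw [hE] at hi ⊢
    have Sσ := mkSetting k hK hpure hU hCM hσK hσU
    apply Sσ.P0 i
    have hσd := Ufree_card_lt hpure hU hσK hσU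
    have hsup : (delV (linkC K σ) U).sup Finset.card = (d - σ.card) - 1 :=
      sup_card_delV_eq (downClosed_linkC hK σ) (pure_link hK hpure)
        (trans_link hK hU hσU) ⟨∅, mem_linkC.2 ⟨Finset.disjoint_empty_left _,
          by rwa [Finset.empty_union]⟩⟩
    rw [dimC_of_sup hsup] at hi
    have h2 : ((d - σ.card : ℕ) : ℤ) = (d : ℤ) - σ.card := Nat.cast_sub (by omega)
    have h3 : ((d - σ.card - 1 : ℕ) : ℤ) = (d : ℤ) - σ.card - 1 := by
      rw [Nat.cast_sub (by omega : 1 ≤ d - σ.card), h2]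
      push_cast
      ring
    omega
  show IsCM k (delV K U) ∧ ∀ v : V, {v} ∈ delV K U →
    IsCM k (delV (delV K U) {v}) ∧ dimC (delV (delV K U) {v}) = dimC (delV K U)
  refine ⟨part1, ?_⟩
  intro v hv
  rw [mem_delV] at hv
  obtain ⟨hvK, hvU'⟩ := hv
  have hvU : v ∉ U := Finset.disjoint_singleton_left.1 hvU'
  rw [delV_delV]
  -- dimension computation for `delV K (U ∪ {v})`
  have hv2dim0 : ∀ u ∈ U, ({u, v} : Finset V) ∈ K →
      (delV (linkC K {u}) {v}).sup Finset.card = d - 1 := by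
    intro u hu hp
    have hp' : ({u, v} : Finset V) ∈ linkC K ∅ := by rwa [linkC_empty]
    have hpiece := (hv2_piece k hK hpure hU hlink (σ := ∅)
      (Finset.disjoint_empty_left U) hvU (Finset.notMem_empty v) hu hp').2
    rw [linkC_empty] at hpiece
    exact hpiece
  have hdimMv : (delV K (U ∪ {v})).sup Finset.card = d - 1 := by
    have := SK.dim_delVw v hvU hvK hv2dim0
    exact this
  constructor
  · -- IsCM of the extra deletion
    intro σ hσ i hi
    rw [mem_delV] at hσ
    obtain ⟨hσK, hσUv⟩ := hσ
    rw [Finset.disjoint_union_right] at hσUv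
    obtain ⟨hσU, hσv'⟩ := hσUv
    have hvσ : v ∉ σ := Finset.disjoint_singleton_right.1 hσv'
    have hE : linkC (delV K (U ∪ {v})) σ = delV (linkC K σ) (U ∪ {v}) :=
      (delV_linkC (Finset.disjoint_union_right.2 ⟨hσU, hσv'⟩)).symm
    rw [hE] at hi ⊢
    have Sσ := mkSetting k hK hpure hU hCM hσK hσU
    have hσd := Ufree_card_lt hpure hU hσK hσU
    have hcast : ((d - σ.card : ℕ) : ℤ) = (d : ℤ) - σ.card := Nat.cast_sub (by omega)
    by_cases hvL : ({v} : Finset V) ∈ linkC K σ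
    · -- v is a vertex of the link : use P2
      have hv2' : ∀ u ∈ U, ({u, v} : Finset V) ∈ linkC K σ →
          (∀ j : ℤ, j < ((d - σ.card : ℕ) : ℤ) - 2 →
            HVanish k (delV (linkC (linkC K σ) {u}) {v}) j) ∧
          (delV (linkC (linkC K σ) {u}) {v}).sup Finset.card = d - σ.card - 1 := by
        intro u hu htrig
        have hpiece := hv2_piece k hK hpure hU hlink hσU hvU hvσ hu htrig
        refine ⟨fun j hj => hpiece.1 j (by omega), hpiece.2⟩
      have hdimM := Sσ.dim_delVw v hvU hvL (fun u hu hp => (hv2' u hu hp).2)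
      have hvw : ∀ j : ℤ, j < ((d - σ.card : ℕ) : ℤ) - 2 →
          HVanish k (linkC (linkC K σ) {v}) j := by
        intro j hj
        rw [linkC_linkC (Finset.disjoint_singleton_left.2 hvσ)]
        apply hv_link_any k hK hpure hCM (σ ∪ {v}) j
        have hcard : (σ ∪ {v}).card = σ.card + 1 := by
          rw [Finset.union_comm, ← Finset.insert_eq, Finset.card_insert_of_notMem hvσ]
        rw [hcard]
        push_cast
        omega
      have hvuw : ∀ u ∈ U, ∀ j : ℤ, j < ((d - σ.card : ℕ) : ℤ) - 3 →
          HVanish k (linkC (linkC (linkC K σ) {v}) {u}) j := by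
        intro u hu j hj
        have huσ : u ∉ σ := fun hc => Finset.disjoint_left.1 hσU hc hu
        have huv : u ≠ v := fun h => hvU (h ▸ hu)
        have huσv : u ∉ σ ∪ {v} := by
          rw [Finset.mem_union]
          rintro (h | h)
          · exact huσ h
          · exact huv (Finset.mem_singleton.1 h)
        rw [linkC_linkC (Finset.disjoint_singleton_left.2 hvσ),
          linkC_linkC (Finset.disjoint_singleton_left.2 huσv)]
        apply hv_link_any k hK hpure hCM (σ ∪ {v} ∪ {u}) j
        have hcard : (σ ∪ {v} ∪ {u}).card = σ.card + 2 := by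
          rw [Finset.union_comm _ ({u} : Finset V), ← Finset.insert_eq,
            Finset.card_insert_of_notMem huσv, Finset.union_comm _ ({v} : Finset V),
            ← Finset.insert_eq, Finset.card_insert_of_notMem hvσ]
        rw [hcard]
        push_cast
        omega
      have hP2 := Sσ.P2 v hvU hvL hvw hvuw hv2'
      apply hP2 i
      rw [dimC_of_sup hdimM] at hi
      have h3 : ((d - σ.card - 1 : ℕ) : ℤ) = (d : ℤ) - σ.card - 1 := by
        rw [Nat.cast_sub (by omega : 1 ≤ d - σ.card), hcast]
        push_cast
        ring
      omega
    · -- v is not a vertex of the link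
      rw [delV_extra_vertex (downClosed_linkC hK σ) hvL] at hi ⊢
      apply Sσ.P0 i
      have hsup : (delV (linkC K σ) U).sup Finset.card = (d - σ.card) - 1 :=
        sup_card_delV_eq (downClosed_linkC hK σ) (pure_link hK hpure)
          (trans_link hK hU hσU) ⟨∅, mem_linkC.2 ⟨Finset.disjoint_empty_left _,
            by rwa [Finset.empty_union]⟩⟩
      rw [dimC_of_sup hsup] at hi
      have h3 : ((d - σ.card - 1 : ℕ) : ℤ) = (d : ℤ) - σ.card - 1 := by
        rw [Nat.cast_sub (by omega : 1 ≤ d - σ.card), hcast]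
        push_cast
        ring
      omega
  · -- dimension equality
    have hsupD : (delV K U).sup Finset.card = d - 1 :=
      sup_card_delV_eq hK hpure hU ⟨∅, hKempty⟩
    rw [dimC_of_sup hdimMv, dimC_of_sup hsupD]
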